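/- arXiv:2604.10779 — 4 statements merged into one kernel-verified Lean document; each statement's English description precedes it below -/
import Mathlib

section
/- For all π ∈ S_n' and all 2 ≤ i ≤ met(π), the sequence C_{π,i} occurs as a subsequence of the sequence (max(b_{π,i-1,j}))_{j=1}^{|C_{π,i-1}|} of block maxima at step i−1. -/
noncomputable section
theorem foldrMaxMem (x : ℕ) (xs : List ℕ) : (x :: xs).foldr max 0 ∈ x :: xs := by
  induction xs generalizing x with
  | nil => simp
  | cons y ys ih =>
    rcases max_choice x ((y :: ys).foldr max 0) with h | h
    · simp only [List.foldr_cons] at h ⊢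
      rw [h]; exact List.mem_cons_self
    · simp only [List.foldr_cons] at h ⊢
      rw [h]; exact List.mem_cons_of_mem _ (ih y)
theorem takeWhileLt (l : List ℕ) (m : ℕ) (hm : m ∈ l) :
    (l.takeWhile (fun y => y ≠ m)).length < l.length := by
  have hd : l.dropWhile (fun y => y ≠ m) ≠ [] := by
    intro h; rw [List.dropWhile_eq_nil_iff] at h; simpa using h m hm
  have h1 : (l.takeWhile (fun y => y ≠ m)).length
      + (l.dropWhile (fun y => y ≠ m)).length = l.length := by
    rw [← List.length_append, List.takeWhile_append_dropWhile]
  have h2 : 0 < (l.dropWhile (fun y => y ≠ m)).length := List.length_pos_iff.mpr hd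
  omega
theorem dropWhileDropLt (l : List ℕ) (m : ℕ) (hl : l ≠ []) :
    ((l.dropWhile (fun y => y ≠ m)).drop 1).length < l.length := by
  have h1 : (l.takeWhile (fun y => y ≠ m)).length
      + (l.dropWhile (fun y => y ≠ m)).length = l.length := by
    rw [← List.length_append, List.takeWhile_append_dropWhile]
  have h2 : 0 < l.length := List.length_pos_iff.mpr hl
  rw [List.length_drop]; omega

/-- West's stack-sorting map `s`: `s([]) = []`, `s(L m R) = s(L) s(R) m` for `m` the maximum. -/
def ss : List ℕ → List ℕ
  | [] => []
  | x :: xs =>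
    ss ((x :: xs).takeWhile (fun y => y ≠ (x :: xs).foldr max 0)) ++
    ss (((x :: xs).dropWhile (fun y => y ≠ (x :: xs).foldr max 0)).drop 1) ++
    [(x :: xs).foldr max 0]
termination_by l => l.length
decreasing_by
  · exact takeWhileLt _ _ (foldrMaxMem _ _)
  · exact dropWhileDropLt _ _ (by simp)

/-- `met π` : the least `k ≥ 0` with `s^k(π)` increasing. -/
def met (l : List ℕ) : ℕ := sInf {k | List.Pairwise (· < ·) (ss^[k] l)}

/-- Right-to-left maxima of a list, read from left to right.  For the prefix of `s^{i-1}(π)`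
before `0` this is exactly the column sequence `C_{π,i}`. -/
def rtlMax : List ℕ → List ℕ
  | [] => []
  | x :: xs => if ∀ y ∈ xs, y < x then x :: rtlMax xs else rtlMax xs

/-- The blocks `b_{π,i,j}`: the segments strictly between consecutive right-to-left maxima. -/
def blocksOf : List ℕ → List (List ℕ)
  | [] => []
  | x :: xs =>
    if ∀ y ∈ xs, y < x then [] :: blocksOf xs
    else
      match blocksOf xs with
      | [] => [[x]]
      | b :: bs => (x :: b) :: bs

/-- The part of `s^{i-1}(π)` strictly before the entry `0`. -/
def prefixAt (π : List ℕ) (i : ℕ) : List ℕ := (ss^[i-1] π).takeWhile (fun x => x ≠ 0)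

/-- The column sequence `C_{π,i}`. -/
def colSeqAt (π : List ℕ) (i : ℕ) : List ℕ := rtlMax (prefixAt π i)

/-- The block sequence `B_{π,i}`. -/
def blocksAt (π : List ℕ) (i : ℕ) : List (List ℕ) := blocksOf (prefixAt π i)

/-- `col_π(v)`: the unique `i` with `v ∈ C_{π,i}` (as the least such `i ≥ 1`). -/
def colOf (π : List ℕ) (v : ℕ) : ℕ := sInf {i | 1 ≤ i ∧ v ∈ colSeqAt π i}

/-- `colpos_π(v)`: the (1-indexed) position of `v` in `C_{π,col_π(v)}`. -/
def colposOf (π : List ℕ) (v : ℕ) : ℕ := (colSeqAt π (colOf π v)).idxOf v + 1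

/-- `leftof_π(v) = c_{π,col_π(v)-1,j}` for the unique `j` with `v = max(b_{π,col_π(v)-1,j})`. -/
def leftOf (π : List ℕ) (v : ℕ) : ℕ :=
  (colSeqAt π (colOf π v - 1)).getD
    (((blocksAt π (colOf π v - 1)).map (fun b => b.foldr max 0)).idxOf v) 0

/-- `row_π(v)`: follow `leftof` back to column 1 and take `colpos` there. -/
def rowOf (π : List ℕ) (v : ℕ) : ℕ := colposOf π ((leftOf π)^[colOf π v - 1] v)

/-- `upof_π(v) = c_{π,col_π(v),colpos_π(v)-1}`. -/
def upOf (π : List ℕ) (v : ℕ) : ℕ := (colSeqAt π (colOf π v)).getD (colposOf π v - 2) 0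

/-- The stack-sorting tableau `T_π(v) = (col_π(v), row_π(v))`. -/
def Tmap (π : List ℕ) (v : ℕ) : ℕ × ℕ := (colOf π v, rowOf π v)

/-- The composition `α_π = (|{v ∈ [n] : row_π(v) = j}|)_{j=1}^{|C_{π,1}|}` (here `n = |π| - 1`). -/
def alphaOf (π : List ℕ) : List ℕ :=
  (List.range' 1 (colSeqAt π 1).length).map
    (fun j => ((Finset.Icc 1 (π.length - 1)).filter (fun v => rowOf π v = j)).card)

/-- Membership in the composition diagram `D(α) = {(i,j) : 1 ≤ j ≤ ℓ(α), 1 ≤ i ≤ α_j}`. -/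
def inDiagram (α : List ℕ) (p : ℕ × ℕ) : Prop :=
  1 ≤ p.1 ∧ 1 ≤ p.2 ∧ p.2 ≤ α.length ∧ p.1 ≤ α.getD (p.2 - 1) 0

instance inDiagramDec (α : List ℕ) : DecidablePred (inDiagram α) := fun p => by
  unfold inDiagram; infer_instance

/-- `D(α)` as a finite set. -/
def diagramFinset (α : List ℕ) : Finset (ℕ × ℕ) :=
  (Finset.range (α.foldr max 0 + 1) ×ˢ Finset.range (α.length + 1)).filter
    (fun p => inDiagram α p)

/-- `colpos_α(i,j) = |{(i,j') ∈ D(α) : j' < j} ∪ {(i,0)}|`. -/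
def colposA (α : List ℕ) (p : ℕ × ℕ) : ℕ :=
  (((Finset.range p.2).filter (fun j' => inDiagram α (p.1, j'))) ∪ {0}).card

/-- `leftof_α(i,j) = (i-1,j)`. -/
def leftA (p : ℕ × ℕ) : ℕ × ℕ := (p.1 - 1, p.2)

/-- `upof_α(i,j) = (i, max({j' < j : (i,j') ∈ D(α)} ∪ {0}))`. -/
def upA (α : List ℕ) (p : ℕ × ℕ) : ℕ × ℕ :=
  (p.1, (((Finset.range p.2).filter (fun j' => inDiagram α (p.1, j'))) ∪ {0}).sup id)

/-- The hook length `h_α(i,j)`. -/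
def hook (α : List ℕ) (p : ℕ × ℕ) : ℕ :=
  if 1 < p.1 then
    ((diagramFinset α).filter (fun q =>
      q.1 ≤ p.1 - 1 ∧ (upA α (p.1 - 1, p.2)).2 < q.2 ∧ q.2 ≤ p.2)).card
  else 1

/-- The segment `B_{π,T}(i,j,k)` of `s^{k-1}(π)`, where `U = T⁻¹`. -/
def Bseg (π : List ℕ) (α : List ℕ) (U : ℕ × ℕ → ℕ) (i j k : ℕ) : List ℕ :=
  if (upA α (leftA (i, j))).2 > 0 then
    ((ss^[k-1] π).take ((ss^[k-1] π).idxOf (U (k, j)) + 1)).drop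
      ((ss^[k-1] π).idxOf (U (k, (upA α (leftA (i, j))).2)) + 1)
  else
    (ss^[k-1] π).take ((ss^[k-1] π).idxOf (U (k, j)) + 1)

/-- The inverse `T_π⁻¹` of the stack-sorting tableau. -/
def invTmap (π : List ℕ) : ℕ × ℕ → ℕ :=
  Function.invFunOn (Tmap π) (Set.Icc 1 (π.length - 1))

/-- A linear extension of `D(α)`, encoded as the list `[T(1), …, T(n)]`:
`T` is a bijection `{1,…,n} → D(α)` with `T(a) ≥_D T(b) → a ≥ b`. -/
def isLinExt (α : List ℕ) (ℓ : List (ℕ × ℕ)) : Prop :=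
  ℓ.Nodup ∧ (∀ p, p ∈ ℓ ↔ inDiagram α p) ∧
  ∀ a b, a < ℓ.length → b < ℓ.length →
    (ℓ.getD a (0, 0)).1 ≤ (ℓ.getD b (0, 0)).1 ∧ (ℓ.getD a (0, 0)).2 ≤ (ℓ.getD b (0, 0)).2 →
    b ≤ a
end


namespace StackAux

lemma le_foldr_max {x : ℕ} {l : List ℕ} (h : x ∈ l) : x ≤ l.foldr max 0 := by
  induction l with
  | nil => simp at h
  | cons a l ih =>
    rcases List.mem_cons.1 h with rfl | h
    · exact le_max_left _ _
    · exact le_trans (ih h) (le_max_right _ _)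

lemma foldr_max_le {l : List ℕ} {m : ℕ} (h : ∀ x ∈ l, x ≤ m) : l.foldr max 0 ≤ m := by
  induction l with
  | nil => simp
  | cons a l ih =>
    simp only [List.foldr_cons, max_le_iff]
    exact ⟨h a (by simp), ih fun x hx => h x (by simp [hx])⟩

lemma foldr_max_eq {l r : List ℕ} {m : ℕ} (h : ∀ x ∈ l ++ r, x ≤ m) :
    (l ++ m :: r).foldr max 0 = m := by
  refine le_antisymm (foldr_max_le ?_) (le_foldr_max (by simp))
  intro x hx
  rcases List.mem_append.1 hx with hx | hx
  · exact h x (by simp [hx])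
  · rcases List.mem_cons.1 hx with rfl | hx
    · exact le_rfl
    · exact h x (by simp [hx])

lemma takeWhile_ne_eq {l r : List ℕ} {m : ℕ} (h : ∀ x ∈ l, x ≠ m) :
    (l ++ m :: r).takeWhile (fun y => y ≠ m) = l := by
  induction l with
  | nil => simp [List.takeWhile]
  | cons a l ih =>
    have h2 := ih fun x hx => h x (by simp [hx])
    rw [List.cons_append, List.takeWhile_cons, if_pos (by simp [h a List.mem_cons_self]), h2]

lemma dropWhile_ne_eq {l r : List ℕ} {m : ℕ} (h : ∀ x ∈ l, x ≠ m) :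
    (l ++ m :: r).dropWhile (fun y => y ≠ m) = m :: r := by
  induction l with
  | nil => simp [List.dropWhile]
  | cons a l ih =>
    have h2 := ih fun x hx => h x (by simp [hx])
    rw [List.cons_append, List.dropWhile_cons, if_pos (by simp [h a List.mem_cons_self]), h2]

lemma ss_eq (l r : List ℕ) (m : ℕ) (h : ∀ x ∈ l ++ r, x < m) :
    ss (l ++ m :: r) = ss l ++ ss r ++ [m] := by
  have hne : ∀ x ∈ l, x ≠ m := fun x hx => Nat.ne_of_lt (h x (by simp [hx]))
  have hle : ∀ x ∈ l ++ r, x ≤ m := fun x hx => le_of_lt (h x hx)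
  obtain ⟨y, ys, hy⟩ : ∃ y ys, l ++ m :: r = y :: ys := by
    cases l with
    | nil => exact ⟨m, r, rfl⟩
    | cons a l => exact ⟨a, l ++ m :: r, rfl⟩
  rw [hy, ss, ← hy, foldr_max_eq hle, takeWhile_ne_eq hne, dropWhile_ne_eq hne, List.drop_one,
    List.tail_cons]

lemma dropWhile_ne_of_mem {m : ℕ} : ∀ {l : List ℕ}, m ∈ l →
    ∃ rest, l.dropWhile (fun y => y ≠ m) = m :: rest
  | [], h => by simp at h
  | a :: l, h => by
    by_cases ha : a = m
    · exact ⟨l, by simp [List.dropWhile_cons, ha]⟩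
    · rcases List.mem_cons.1 h with h' | h'
      · exact absurd h'.symm ha
      · obtain ⟨rest, hr⟩ := dropWhile_ne_of_mem h'
        refine ⟨rest, ?_⟩
        rw [List.dropWhile_cons, if_pos (by simp [ha]), hr]

lemma ss_perm : ∀ l : List ℕ, (ss l).Perm l
  | [] => by rw [ss]
  | x :: xs => by
    set l := x :: xs with hl
    set m := l.foldr max 0 with hm
    have hmem : m ∈ l := foldrMaxMem x xs
    obtain ⟨rest, hrest⟩ := dropWhile_ne_of_mem hmem
    have h1 : (ss (l.takeWhile (fun y => y ≠ m))).Perm (l.takeWhile (fun y => y ≠ m)) :=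
      ss_perm _
    have h2 : (ss rest).Perm rest := ss_perm rest
    rw [hl, ss, ← hl, ← hm, hrest]
    simp only [List.drop_one, List.tail_cons]
    have hsplit : l = (l.takeWhile fun y => y ≠ m) ++ (m :: rest) := by
      conv_lhs => rw [← List.takeWhile_append_dropWhile (p := fun y => y ≠ m) (l := l)]
      rw [hrest]
    have hperm1 : ((l.takeWhile fun y => y ≠ m) ++ rest ++ [m]).Perm l := by
      conv_rhs => rw [hsplit]
      rw [List.append_assoc]
      exact (List.Perm.refl _).append (List.perm_append_singleton m rest)
    exact ((h1.append h2).append (List.Perm.refl [m])).trans hperm1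
termination_by l => l.length
decreasing_by
  · exact takeWhileLt _ _ hmem
  · have := dropWhileDropLt l m (by simp [hl])
    rw [hrest] at this
    simp only [hl, List.length_cons, List.drop_succ_cons, List.drop_zero] at this ⊢; omega

lemma rtlMax_subset : ∀ {l : List ℕ} {x : ℕ}, x ∈ rtlMax l → x ∈ l
  | [], x, h => by simp [rtlMax] at h
  | a :: l, x, h => by
    rw [rtlMax] at h
    split at h
    · rcases List.mem_cons.1 h with rfl | h
      · exact List.mem_cons_self
      · exact List.mem_cons_of_mem _ (rtlMax_subset h)
    · exact List.mem_cons_of_mem _ (rtlMax_subset h)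

lemma blocksOf_sublist : ∀ {l : List ℕ} {b : List ℕ}, b ∈ blocksOf l → b.Sublist l
  | [], b, h => by simp [blocksOf] at h
  | a :: l, b, h => by
    rw [blocksOf] at h
    split at h
    · rcases List.mem_cons.1 h with rfl | h
      · exact List.nil_sublist _
      · exact (blocksOf_sublist h).cons _
    · rcases hbo : blocksOf l with _ | ⟨c, bs⟩ <;> rw [hbo] at h
      · simp only [List.mem_singleton] at h
        subst h
        simp
      · rcases List.mem_cons.1 h with rfl | h
        · exact (blocksOf_sublist (by rw [hbo]; exact List.mem_cons_self)).cons₂ _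
        · exact ((blocksOf_sublist (by rw [hbo]; exact List.mem_cons_of_mem _ h))).cons _

lemma blocks_decomp {c : ℕ} : ∀ {b rest : List ℕ}, (∀ x ∈ b, x < c) → (∀ x ∈ rest, x < c) →
    blocksOf (b ++ c :: rest) = b :: blocksOf rest ∧ rtlMax (b ++ c :: rest) = c :: rtlMax rest
  | [], rest, _, hr => by
    rw [List.nil_append, blocksOf, rtlMax, if_pos hr, if_pos hr]
    exact ⟨rfl, rfl⟩
  | a :: b, rest, hb, hr => by
    have hab : ∀ x ∈ b, x < c := fun x hx => hb x (by simp [hx])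
    have ha : a < c := hb a (by simp)
    obtain ⟨ih1, ih2⟩ := blocks_decomp hab hr
    have hcond : ¬ (∀ y ∈ b ++ c :: rest, y < a) := by
      intro hy
      exact absurd (hy c (by simp)) (by omega)
    rw [List.cons_append, blocksOf, rtlMax, if_neg hcond, if_neg hcond, ih1, ih2]
    exact ⟨rfl, rfl⟩

lemma rtlMax_prefix_small {m : ℕ} {rest : List ℕ} : ∀ {q : List ℕ}, (∀ x ∈ q, x < m) →
    rtlMax (q ++ m :: rest) = rtlMax (m :: rest)
  | [], _ => rfl
  | a :: q, h => by
    have hcond : ¬ (∀ y ∈ q ++ m :: rest, y < a) := by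
      intro hy
      exact absurd (hy m (by simp)) (by have := h a (by simp); omega)
    rw [List.cons_append, rtlMax, if_neg hcond]
    exact rtlMax_prefix_small fun x hx => h x (by simp [hx])

lemma sub_lemma : ∀ (qs : List (List ℕ)),
    (∀ q ∈ qs, q = [] ∨ ∃ q' m, q = q' ++ [m] ∧ (∀ x ∈ q', x < m)) →
    (rtlMax qs.flatten).Sublist (qs.map (fun q => q.foldr max 0))
  | [], _ => by simp [rtlMax]
  | q :: qs, h => by
    have ih := sub_lemma qs fun q hq => h q (by simp [hq])
    rcases h q (by simp) with rfl | ⟨q', m, rfl, hq'⟩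
    · simpa using ih.cons _
    · rw [List.flatten_cons, List.append_assoc, List.singleton_append, rtlMax_prefix_small hq',
        List.map_cons, foldr_max_eq (r := []) (by simpa using fun x hx => le_of_lt (hq' x hx)),
        rtlMax]
      split
      · exact ih.cons₂ _
      · exact ih.cons _

lemma ss_nil : ss [] = [] := by rw [ss]

lemma ss_sorted_aux : ∀ (n : ℕ) (l : List ℕ), l.length ≤ n → l.Pairwise (· < ·) → ss l = l := by
  intro n
  induction n with
  | zero =>
    intro l hlen _
    have hl0 : l = [] := List.length_eq_zero_iff.1 (Nat.le_zero.1 hlen)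
    rw [hl0, ss_nil]
  | succ n ih =>
    intro l hlen hl
    rcases l.eq_nil_or_concat with rfl | ⟨l', m, rfl⟩
    · exact ss_nil
    · rw [List.concat_eq_append] at hl hlen ⊢
      have hlt : ∀ x ∈ l' ++ ([] : List ℕ), x < m := by
        simp only [List.append_nil]
        intro x hx
        exact (List.pairwise_append.1 hl).2.2 x hx m (by simp)
      rw [ss_eq l' [] m hlt, ss_nil,
        ih l' (by simp at hlen; omega) (List.pairwise_append.1 hl).1]
      simp

lemma ss_sorted (l : List ℕ) (hl : l.Pairwise (· < ·)) : ss l = l :=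
  ss_sorted_aux l.length l le_rfl hl

lemma main_lemma : ∀ (N : ℕ) (P T : List ℕ), P.length + T.length ≤ N →
    (P ++ 0 :: T).Nodup → 0 ∉ P → 0 ∉ T → T.Pairwise (· < ·) →
    ∃ Z : List ℕ, ss (P ++ 0 :: T) = ((blocksOf P).map ss).flatten ++ 0 :: Z ∧
      Z.Pairwise (· < ·) ∧ Z.Perm (rtlMax P ++ T) := by
  intro N
  induction N with
  | zero =>
    intro P T hlen hnd hP0 hT0 hTs
    have hP : P = [] := List.length_eq_zero_iff.1 (by omega)
    have hT : T = [] := List.length_eq_zero_iff.1 (by omega)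
    subst hP hT
    refine ⟨[], ?_, List.Pairwise.nil, List.Perm.refl _⟩
    simp only [List.nil_append]
    rw [ss_sorted [0] (by simp)]
    simp [blocksOf]
  | succ N ih =>
    intro P T hlen hnd hP0 hT0 hTs
    by_cases hP : P = []
    · subst hP
      refine ⟨T, ?_, hTs, by simp [rtlMax]⟩
      simp only [List.nil_append]
      rw [ss_sorted (0 :: T) ?_]
      · simp [blocksOf]
      · rw [List.pairwise_cons]
        exact ⟨fun b hb => Nat.pos_of_ne_zero (fun h => hT0 (h ▸ hb)), hTs⟩
    · -- P nonempty; let c be its max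
      set c := P.foldr max 0 with hc
      have hcP : c ∈ P := by
        rcases P with _ | ⟨x, xs⟩
        · exact absurd rfl hP
        · exact foldrMaxMem x xs
      have hPle : ∀ x ∈ P, x ≤ c := fun x hx => le_foldr_max hx
      have hc0 : 0 < c := Nat.pos_of_ne_zero (fun h => hP0 (h ▸ hcP))
      have hdisj : List.Disjoint P (0 :: T) := fun a ha hb => (List.nodup_append.1 hnd).2.2 a ha a hb rfl
      by_cases hTc : ∀ x ∈ T, x < c
      · -- peel c
        obtain ⟨rest, hrest⟩ := dropWhile_ne_of_mem (m := c) hcP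
        set b := P.takeWhile (fun y => y ≠ c) with hbdef
        have hPsplit : P = b ++ c :: rest := by
          rw [hbdef, ← hrest, List.takeWhile_append_dropWhile]
        have hPnd : P.Nodup := ((List.nodup_append.1 hnd)).1
        have hcrest : c ∉ rest := by
          rw [hPsplit, List.nodup_append] at hPnd
          exact (List.nodup_cons.1 hPnd.2.1).1
        have hb : ∀ x ∈ b, x < c := by
          intro x hx
          have hxP : x ∈ P := (List.takeWhile_sublist _).mem hx
          have hxne : x ≠ c := by simpa using List.mem_takeWhile_imp hx
          exact lt_of_le_of_ne (hPle x hxP) hxne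
        have hrlt : ∀ x ∈ rest, x < c := by
          intro x hx
          have hxP : x ∈ P := by rw [hPsplit]; simp [hx]
          exact lt_of_le_of_ne (hPle x hxP) (fun h => hcrest (h ▸ hx))
        obtain ⟨hblocks, hrtl⟩ := blocks_decomp hb hrlt
        rw [← hPsplit] at hblocks hrtl
        have hkey : P ++ 0 :: T = b ++ c :: (rest ++ 0 :: T) := by
          rw [hPsplit]; simp
        have hcond : ∀ x ∈ b ++ (rest ++ 0 :: T), x < c := by
          intro x hx
          rcases List.mem_append.1 hx with hx | hx
          · exact hb x hx
          · rcases List.mem_append.1 hx with hx | hx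
            · exact hrlt x hx
            · rcases List.mem_cons.1 hx with rfl | hx
              · exact hc0
              · exact hTc x hx
        have hsub : (rest ++ 0 :: T).Sublist (P ++ 0 :: T) := by
          rw [hPsplit, List.append_assoc]
          exact ((List.sublist_cons_self c _).trans (List.sublist_append_right b _))
        have hndr : (rest ++ 0 :: T).Nodup := hsub.nodup hnd
        have h0rest : 0 ∉ rest := fun h => hP0 (by rw [hPsplit]; simp [h])
        have hlenr : rest.length + T.length ≤ N := by
          have : P.length = b.length + 1 + rest.length := by rw [hPsplit]; simp; omega
          omega
        obtain ⟨Z', hZeq, hZs, hZp⟩ := ih rest T hlenr hndr h0rest hT0 hTs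
        refine ⟨Z' ++ [c], ?_, ?_, ?_⟩
        · rw [hkey, ss_eq b _ c hcond, hZeq, hblocks]
          simp
        · rw [List.pairwise_append]
          refine ⟨hZs, by simp, ?_⟩
          intro x hx y hy
          rcases List.mem_singleton.1 hy with rfl
          rcases List.mem_append.1 (hZp.mem_iff.1 hx) with hx | hx
          · exact hrlt x (rtlMax_subset hx)
          · exact hTc x hx
        · rw [hrtl]
          refine (hZp.append_right [c]).trans ?_
          simpa using List.perm_append_singleton c (rtlMax rest ++ T)
      · -- peel the last element of T
        push_neg at hTc
        obtain ⟨x0, hx0T, hx0c⟩ := hTc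
        have hTne : T ≠ [] := by rintro rfl; simp at hx0T
        obtain ⟨T', t, hTsplit⟩ := (T.eq_nil_or_concat).resolve_left hTne
        rw [List.concat_eq_append] at hTsplit
        subst hTsplit
        have hT'lt : ∀ x ∈ T', x < t := by
          intro x hx
          exact (List.pairwise_append.1 hTs).2.2 x hx t (by simp)
        have hct : c < t := by
          rcases List.mem_append.1 hx0T with hx | hx
          · exact lt_of_le_of_lt hx0c (hT'lt x0 hx)
          · rcases List.mem_singleton.1 hx with rfl
            refine lt_of_le_of_ne hx0c fun h => hdisj hcP ?_
            rw [h]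
            exact List.mem_cons_of_mem _ hx0T
        have hcond : ∀ x ∈ (P ++ 0 :: T') ++ ([] : List ℕ), x < t := by
          intro x hx
          simp only [List.append_nil] at hx
          rcases List.mem_append.1 hx with hx | hx
          · exact lt_of_le_of_lt (hPle x hx) hct
          · rcases List.mem_cons.1 hx with rfl | hx
            · omega
            · exact hT'lt x hx
        have hkey : P ++ 0 :: (T' ++ [t]) = (P ++ 0 :: T') ++ t :: [] := by simp
        have hsub : (P ++ 0 :: T').Sublist (P ++ 0 :: (T' ++ [t])) :=
          ((T'.sublist_append_left [t]).cons₂ 0).append_left P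
        obtain ⟨Z', hZeq, hZs, hZp⟩ := ih P T' (by rw [List.length_append, List.length_singleton] at hlen; omega) (hsub.nodup hnd)
          hP0 (fun h => hT0 (by simp [h])) (List.pairwise_append.1 hTs).1
        refine ⟨Z' ++ [t], ?_, ?_, ?_⟩
        · rw [hkey, ss_eq _ [] t hcond, ss_nil, hZeq]
          simp
        · rw [List.pairwise_append]
          refine ⟨hZs, by simp, ?_⟩
          intro x hx y hy
          rcases List.mem_singleton.1 hy with rfl
          rcases List.mem_append.1 (hZp.mem_iff.1 hx) with hx | hx
          · exact lt_of_le_of_lt (hPle x (rtlMax_subset hx)) hct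
          · exact hT'lt x hx
        · refine (hZp.append_right [t]).trans ?_
          rw [List.append_assoc]

lemma foldr_max_perm {l l' : List ℕ} (h : l.Perm l') : l.foldr max 0 = l'.foldr max 0 := by
  refine le_antisymm (foldr_max_le fun x hx => le_foldr_max (h.mem_iff.1 hx))
    (foldr_max_le fun x hx => le_foldr_max (h.mem_iff.2 hx))

lemma ss_cons (x : ℕ) (xs : List ℕ) :
    ∃ q', ss (x :: xs) = q' ++ [(x :: xs).foldr max 0] := by
  rw [ss]
  exact ⟨_, rfl⟩

lemma flatten_mem {P : List ℕ} {x : ℕ}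
    (hx : x ∈ ((blocksOf P).map ss).flatten) : x ∈ P := by
  obtain ⟨q, hq, hxq⟩ := List.mem_flatten.1 hx
  obtain ⟨b, hb, rfl⟩ := List.mem_map.1 hq
  exact (blocksOf_sublist hb).mem ((ss_perm b).mem_iff.1 hxq)

lemma iter_perm (π : List ℕ) : ∀ k, (ss^[k] π).Perm π := by
  intro k
  induction k with
  | zero => simp
  | succ k ih =>
    rw [Function.iterate_succ_apply']
    exact (ss_perm _).trans ih

lemma invariant (n : ℕ) (π : List ℕ) (hπ : π.Perm (List.range (n + 1)))
    (h0 : π.getLast? = some 0) :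
    ∀ k, ∃ P T : List ℕ, ss^[k] π = P ++ 0 :: T ∧ 0 ∉ P ∧ 0 ∉ T ∧
      T.Pairwise (· < ·) := by
  have hnd : π.Nodup := hπ.nodup_iff.2 (List.nodup_range)
  intro k
  induction k with
  | zero =>
    have hne : π ≠ [] := by rintro rfl; simp at h0
    have hlast : π.getLast hne = 0 := by
      rw [List.getLast?_eq_getLast hne] at h0
      exact Option.some_injective _ h0
    refine ⟨π.dropLast, [], ?_, ?_, by simp, List.Pairwise.nil⟩
    · simp only [Function.iterate_zero, id_eq]
      conv_rhs => rw [← hlast]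
      exact (List.dropLast_append_getLast hne).symm
    · intro hmem
      have := List.dropLast_append_getLast hne
      rw [hlast] at this
      rw [← this, List.nodup_append] at hnd
      exact hnd.2.2 _ hmem _ (by simp) rfl
  | succ k ih =>
    obtain ⟨P, T, hw, hP0, hT0, hTs⟩ := ih
    have hwnd : (P ++ 0 :: T).Nodup := hw ▸ ((iter_perm π k).nodup_iff.2 hnd)
    obtain ⟨Z, hZeq, hZs, hZp⟩ := main_lemma (P.length + T.length) P T le_rfl hwnd hP0 hT0 hTs
    refine ⟨((blocksOf P).map ss).flatten, Z, ?_, ?_, ?_, hZs⟩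
    · rw [Function.iterate_succ_apply', hw, hZeq]
    · exact fun h => hP0 (flatten_mem h)
    · intro h
      rcases List.mem_append.1 (hZp.mem_iff.1 h) with h | h
      · exact hP0 (rtlMax_subset h)
      · exact hT0 h

end StackAux


/-- Corollary 3.5: for `2 ≤ i ≤ met(π)`, `C_{π,i}` is a subsequence of the sequence of
block maxima `(max(b_{π,i-1,j}))_j`. -/
theorem stmt_9 (n : ℕ) (π : List ℕ) (hπ : π.Perm (List.range (n + 1)))
    (h0 : π.getLast? = some 0) (i : ℕ) (hi : 2 ≤ i) (him : i ≤ met π) :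
    (colSeqAt π i).Sublist ((blocksAt π (i - 1)).map (fun b => b.foldr max 0)) := by
  obtain ⟨P, T, hw, hP0, hT0, hTs⟩ := StackAux.invariant n π hπ h0 (i - 2)
  have hnd : (P ++ 0 :: T).Nodup :=
    hw ▸ ((StackAux.iter_perm π _).nodup_iff.2 (hπ.nodup_iff.2 (List.nodup_range)))
  obtain ⟨Z, hZeq, hZs, hZp⟩ := StackAux.main_lemma (P.length + T.length) P T le_rfl hnd
    hP0 hT0 hTs
  have hpre1 : prefixAt π (i - 1) = P := by
    unfold prefixAt
    have h2 : i - 1 - 1 = i - 2 := by omega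
    rw [h2, hw]
    exact StackAux.takeWhile_ne_eq (fun x hx h => hP0 (h ▸ hx))
  have hiter : ss^[i - 1] π = ss (P ++ 0 :: T) := by
    have h2 : i - 1 = (i - 2) + 1 := by omega
    rw [h2, Function.iterate_succ_apply', hw]
  have hpre2 : prefixAt π i = ((blocksOf P).map ss).flatten := by
    unfold prefixAt
    rw [hiter, hZeq]
    exact StackAux.takeWhile_ne_eq (fun x hx h => hP0 (h ▸ StackAux.flatten_mem hx))
  rw [colSeqAt, hpre2, blocksAt, hpre1]
  have hPnd : P.Nodup := (List.nodup_append.1 hnd).1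
  have hsub := StackAux.sub_lemma ((blocksOf P).map ss) ?_
  · have hmapeq : (((blocksOf P).map ss).map (fun q => q.foldr max 0)) =
        (blocksOf P).map (fun b => b.foldr max 0) := by
      rw [List.map_map]
      exact List.map_congr_left (fun b _ => StackAux.foldr_max_perm (StackAux.ss_perm b))
    rwa [hmapeq] at hsub
  · intro q hq
    obtain ⟨b, hb, rfl⟩ := List.mem_map.1 hq
    rcases b with _ | ⟨x, xs⟩
    · exact Or.inl StackAux.ss_nil
    · right
      obtain ⟨q', hq'⟩ := StackAux.ss_cons x xs
      refine ⟨q', (x :: xs).foldr max 0, hq', ?_⟩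
      have hbnd : (x :: xs).Nodup := (StackAux.blocksOf_sublist hb).nodup hPnd
      have hssnd : (ss (x :: xs)).Nodup := (StackAux.ss_perm _).nodup_iff.2 hbnd
      rw [hq', List.nodup_append] at hssnd
      intro y hy
      have hyb : y ∈ (x :: xs) := (StackAux.ss_perm _).mem_iff.1
        (by rw [hq']; exact List.mem_append_left _ hy)
      refine lt_of_le_of_ne (StackAux.le_foldr_max hyb) fun h => ?_
      exact hssnd.2.2 _ hy _ (by simp [h]) rfl
end

section
/- For all π ∈ S_n' and all 1 ≤ i ≤ met(π), the sequence (row_π(c_{π,i,j}))_{j=1}^{|C_{π,i}|} is strictly increasing. -/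
namespace SSAux
open List

lemma le_foldr_max (l : List ℕ) : ∀ y ∈ l, y ≤ l.foldr max 0 := by
  induction l with
  | nil => simp
  | cons x xs ih =>
    intro y hy
    rcases List.mem_cons.1 hy with rfl | hy
    · exact le_max_left _ _
    · exact le_trans (ih y hy) (le_max_right _ _)

lemma max_mem (l : List ℕ) (hl : l ≠ []) : l.foldr max 0 ∈ l := by
  cases l with
  | nil => exact absurd rfl hl
  | cons x xs => exact foldrMaxMem x xs

lemma split_at_max (l : List ℕ) (hl : l ≠ []) :
    l = l.takeWhile (fun y => y ≠ l.foldr max 0) ++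
      l.foldr max 0 :: (l.dropWhile (fun y => y ≠ l.foldr max 0)).drop 1 := by
  set m := l.foldr max 0 with hm
  have hmem : m ∈ l := max_mem l hl
  have hd : l.dropWhile (fun y => y ≠ m) ≠ [] := by
    intro h; rw [List.dropWhile_eq_nil_iff] at h
    simpa using h m hmem
  have hh : ((l.dropWhile (fun y => y ≠ m)).head hd) = m := by
    have := List.head_dropWhile_not (fun y => decide (y ≠ m)) hd
    simpa using this
  have htail := List.cons_head_tail (l := l.dropWhile (fun y => y ≠ m)) hd
  rw [hh] at htail
  rw [List.drop_one, htail, List.takeWhile_append_dropWhile]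

lemma ss_cons (x : ℕ) (xs : List ℕ) :
    ss (x :: xs) =
      ss ((x :: xs).takeWhile (fun y => y ≠ (x :: xs).foldr max 0)) ++
      ss (((x :: xs).dropWhile (fun y => y ≠ (x :: xs).foldr max 0)).drop 1) ++
      [(x :: xs).foldr max 0] := by
  rw [ss]

lemma ss_eq (l : List ℕ) (hl : l ≠ []) :
    ss l = ss (l.takeWhile (fun y => y ≠ l.foldr max 0)) ++
      ss ((l.dropWhile (fun y => y ≠ l.foldr max 0)).drop 1) ++ [l.foldr max 0] := by
  cases l with
  | nil => exact absurd rfl hl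
  | cons x xs => exact ss_cons x xs

lemma ss_perm_aux : ∀ (n : ℕ) (l : List ℕ), l.length ≤ n → (ss l).Perm l := by
  intro n
  induction n with
  | zero =>
    intro l hl
    have : l = [] := List.length_eq_zero_iff.1 (Nat.le_zero.1 hl)
    subst this; rw [ss]
  | succ n ih =>
    intro l hl
    rcases eq_or_ne l [] with rfl | hlne
    · rw [ss]
    · set m := l.foldr max 0 with hm
      set T := l.takeWhile (fun y => y ≠ m) with hT
      set D := (l.dropWhile (fun y => y ≠ m)).drop 1 with hD
      have hsplit : l = T ++ m :: D := split_at_max l hlne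
      have hTlen : T.length < l.length := takeWhileLt l m (max_mem l hlne)
      have hDlen : D.length < l.length := dropWhileDropLt l m hlne
      have pT : (ss T).Perm T := ih T (by omega)
      have pD : (ss D).Perm D := ih D (by omega)
      calc ss l = ss T ++ ss D ++ [m] := ss_eq l hlne
      _ ~ T ++ D ++ [m] := ((pT.append pD).append (List.Perm.refl _))
      _ ~ T ++ (m :: D) := by
          rw [List.append_assoc]
          exact (List.Perm.refl T).append (List.perm_append_comm.trans (by simp))
      _ = l := hsplit.symm

lemma ss_perm (l : List ℕ) : (ss l).Perm l := ss_perm_aux l.length l le_rfl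

lemma mem_ss {l : List ℕ} {a : ℕ} : a ∈ ss l ↔ a ∈ l := (ss_perm l).mem_iff

end SSAux
namespace SSAux
open List

/-- prefix before 0 -/
def pf (l : List ℕ) : List ℕ := l.takeWhile (fun x => x ≠ 0)

lemma prefixAt_eq (π : List ℕ) (i : ℕ) : prefixAt π i = pf (ss^[i-1] π) := rfl

lemma zero_not_mem_pf (l : List ℕ) : 0 ∉ pf l := by
  intro h
  have := List.mem_takeWhile_imp h
  simp at this

lemma pf_sublist (l : List ℕ) : (pf l).Sublist l := List.takeWhile_sublist _

lemma pf_append_of_mem {A : List ℕ} (B : List ℕ) (h0 : (0:ℕ) ∈ A) :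
    pf (A ++ B) = pf A := by
  induction A with
  | nil => simp at h0
  | cons x xs ih =>
    rcases List.mem_cons.1 h0 with rfl | h0
    · simp [pf, List.takeWhile]
    · unfold pf at *
      rcases eq_or_ne x 0 with rfl | hx
      · simp [List.takeWhile]
      · simp only [List.cons_append, List.takeWhile_cons]
        simp only [hx, ne_eq, not_false_eq_true, decide_true, if_true]
        simpa using ih h0

lemma pf_append_of_not_mem {A : List ℕ} (B : List ℕ) (h0 : (0:ℕ) ∉ A) :
    pf (A ++ B) = A ++ pf B := by
  induction A with
  | nil => simp
  | cons x xs ih =>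
    have hx : x ≠ 0 := fun h => h0 (h ▸ List.mem_cons_self)
    have h0' : (0:ℕ) ∉ xs := fun h => h0 (List.mem_cons_of_mem _ h)
    unfold pf at *
    simp only [List.cons_append, List.takeWhile_cons]
    simp only [hx, ne_eq, not_false_eq_true, decide_true, if_true]
    simpa using ih h0'

/-- rtlMax basic lemmas -/
lemma rtlMax_sublist (l : List ℕ) : (rtlMax l).Sublist l := by
  induction l with
  | nil => simp [rtlMax]
  | cons x xs ih =>
    rw [rtlMax]
    split
    · exact ih.cons₂ x
    · exact ih.cons x

lemma rtlMax_subset {l : List ℕ} : ∀ {v}, v ∈ rtlMax l → v ∈ l :=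
  fun h => (rtlMax_sublist l).subset h

lemma blocksOf_ne_nil : ∀ (l : List ℕ), l ≠ [] → blocksOf l ≠ [] := by
  intro l hl
  induction l with
  | nil => exact absurd rfl hl
  | cons x xs ih =>
    rw [blocksOf]
    split
    · simp
    · rcases eq_or_ne xs [] with rfl | hxs
      · simp_all [blocksOf]
      · have := ih hxs
        cases h : blocksOf xs with
        | nil => exact absurd h this
        | cons b bs => simp [h]

lemma blocksOf_join_subset : ∀ (l : List ℕ), ∀ v ∈ (blocksOf l).flatten, v ∈ l := by
  intro l
  induction l with
  | nil => simp [blocksOf]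
  | cons x xs ih =>
    intro v hv
    rw [blocksOf] at hv
    split at hv
    · simp only [List.flatten_cons, List.nil_append] at hv
      exact List.mem_cons_of_mem _ (ih v hv)
    · rcases h : blocksOf xs with _ | ⟨b, bs⟩
      · rw [h] at hv; simp at hv
        simp [hv]
      · rw [h] at hv
        simp only [List.flatten_cons, List.mem_append, List.mem_cons] at hv
        rcases hv with (rfl | hv) | hv
        · simp
        · exact List.mem_cons_of_mem _ (ih v (by rw [h]; simp [hv]))
        · exact List.mem_cons_of_mem _ (ih v (by rw [h]; simp [hv]))

lemma blocksOf_join_cons {x : ℕ} {xs : List ℕ} (h : ¬ ∀ y ∈ xs, y < x) :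
    (blocksOf (x :: xs)).flatten = x :: (blocksOf xs).flatten := by
  rw [blocksOf]
  rw [if_neg h]
  have hxs : xs ≠ [] := by
    rintro rfl; exact h (by simp)
  have := blocksOf_ne_nil xs hxs
  cases hb : blocksOf xs with
  | nil => exact absurd hb this
  | cons b bs => simp

lemma rtlMax_blocksOf_disjoint : ∀ (l : List ℕ), l.Nodup →
    ∀ v ∈ rtlMax l, v ∉ (blocksOf l).flatten := by
  intro l
  induction l with
  | nil => simp [rtlMax]
  | cons x xs ih =>
    intro hnd v hv
    have hx : x ∉ xs := (List.nodup_cons.1 hnd).1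
    have hnd' : xs.Nodup := (List.nodup_cons.1 hnd).2
    rw [rtlMax] at hv
    split at hv
    · rename_i hall
      rw [blocksOf, if_pos hall]
      simp only [List.flatten_cons, List.nil_append]
      rcases List.mem_cons.1 hv with rfl | hv
      · exact fun hc => hx (blocksOf_join_subset xs v hc)
      · exact ih hnd' v hv
    · rename_i hall
      rw [blocksOf_join_cons hall]
      intro hc
      rcases List.mem_cons.1 hc with rfl | hc
      · exact hx (rtlMax_subset hv)
      · exact ih hnd' v hv hc

end SSAux
namespace SSAux
open List

lemma rtlMax_append (A B : List ℕ) :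
    rtlMax (A ++ B) =
      (rtlMax A).filter (fun x => decide (∀ y ∈ B, y < x)) ++ rtlMax B := by
  induction A with
  | nil => simp [rtlMax]
  | cons x A' ih =>
    rw [List.cons_append, rtlMax, rtlMax]
    by_cases hA : ∀ y ∈ A', y < x
    · by_cases hB : ∀ y ∈ B, y < x
      · rw [if_pos (by intro y hy; rcases List.mem_append.1 hy with h | h
                       exacts [hA y h, hB y h]),
           if_pos hA, ih]
        simp only [List.filter_cons, List.cons_append]
        rw [if_pos (by simpa using hB)]
        simp
      · rw [if_neg (by intro hall; exact hB fun y hy => hall y (List.mem_append.2 (Or.inr hy))),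
           if_pos hA, ih]
        simp only [List.filter_cons]
        rw [if_neg (by simpa using hB)]
    · rw [if_neg (by intro hall; exact hA fun y hy => hall y (List.mem_append.2 (Or.inl hy))),
         if_neg hA, ih]

lemma rtlMax_ss (b : List ℕ) (hb : b ≠ []) (hnd : b.Nodup) :
    rtlMax (ss b) = [b.foldr max 0] := by
  set m := b.foldr max 0 with hm
  set T := b.takeWhile (fun y => y ≠ m) with hT
  set D := (b.dropWhile (fun y => y ≠ m)).drop 1 with hD
  have hsplit : b = T ++ m :: D := split_at_max b hb
  have hTm : ∀ y ∈ T, y ≠ m := by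
    intro y hy
    have := List.mem_takeWhile_imp (p := fun y => decide (y ≠ m)) hy
    simpa using this
  have hDm : m ∉ D := by
    intro hmD
    have : ¬ (T ++ m :: D).Nodup := by
      simp [List.nodup_append]
      intro _ h _; exact absurd hmD h
    rw [← hsplit] at this; exact this hnd
  have hlt : ∀ y, y ∈ T ∨ y ∈ D → y < m := by
    intro y hy
    have hymem : y ∈ b := by
      rw [hsplit]
      rcases hy with h | h
      · exact List.mem_append.2 (Or.inl h)
      · exact List.mem_append.2 (Or.inr (List.mem_cons_of_mem _ h))
    have hle : y ≤ m := le_foldr_max b y hymem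
    rcases hy with h | h
    · exact lt_of_le_of_ne hle (hTm y h)
    · exact lt_of_le_of_ne hle (fun h' => hDm (h' ▸ h))
  rw [ss_eq b hb, ← hT, ← hD, ← hm]
  rw [List.append_assoc, rtlMax_append, rtlMax_append]
  have h1 : (rtlMax (ss T)).filter
      (fun x => decide (∀ y ∈ ss D ++ [m], y < x)) = [] := by
    rw [List.filter_eq_nil_iff]
    intro x hx
    have hxT : x ∈ T := mem_ss.1 (rtlMax_subset hx)
    have : ¬ (∀ y ∈ ss D ++ [m], y < x) := by
      intro hall
      have := hall m (List.mem_append.2 (Or.inr (by simp)))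
      exact absurd (hlt x (Or.inl hxT)) (not_lt.2 (le_of_lt this))
    simpa using this
  have h2 : (rtlMax (ss D)).filter (fun x => decide (∀ y ∈ [m], y < x)) = [] := by
    rw [List.filter_eq_nil_iff]
    intro x hx
    have hxD : x ∈ D := mem_ss.1 (rtlMax_subset hx)
    have : ¬ (∀ y ∈ [m], y < x) := by
      intro hall
      exact absurd (hlt x (Or.inr hxD)) (not_lt.2 (le_of_lt (hall m (by simp))))
    simpa using this
  rw [h1, h2]
  simp [rtlMax]

lemma blocksOf_split (T P : List ℕ) (m : ℕ) (hT : ∀ y ∈ T, y < m)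
    (hP : ∀ y ∈ P, y < m) :
    blocksOf (T ++ m :: P) = T :: blocksOf P := by
  induction T with
  | nil =>
    simp only [List.nil_append]
    rw [blocksOf, if_pos hP]
  | cons x T' ih =>
    have hx : x < m := hT x (List.mem_cons_self)
    have ihT : ∀ y ∈ T', y < m := fun y hy => hT y (List.mem_cons_of_mem _ hy)
    rw [List.cons_append, blocksOf]
    rw [if_neg (by
      intro hall
      exact absurd (hall m (List.mem_append.2 (Or.inr (List.mem_cons_self))))
        (not_lt.2 (le_of_lt hx)))]
    rw [ih ihT]

/-- The key structural lemma. -/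
lemma key_struct_aux : ∀ (n : ℕ) (l : List ℕ), l.length ≤ n → l.Nodup → (0:ℕ) ∈ l →
    pf (ss l) = ((blocksOf (pf l)).map ss).flatten := by
  intro n
  induction n with
  | zero =>
    intro l hl _ h0
    have : l = [] := List.length_eq_zero_iff.1 (Nat.le_zero.1 hl)
    subst this; simp at h0
  | succ n ih =>
  intro l hl hnd h0
  have hlne : l ≠ [] := by rintro rfl; simp at h0
  set m := l.foldr max 0 with hm
  set T := l.takeWhile (fun y => y ≠ m) with hT
  set D := (l.dropWhile (fun y => y ≠ m)).drop 1 with hD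
  have hsplit : l = T ++ m :: D := split_at_max l hlne
  have hTsub : T.Sublist l := List.takeWhile_sublist _
  have hDsub : D.Sublist l := by
    rw [hsplit]; exact ((List.sublist_cons_self m D).trans (List.sublist_append_right T _))
  have hndT : T.Nodup := hTsub.nodup hnd
  have hndD : D.Nodup := hDsub.nodup hnd
  have hsseq := ss_eq l hlne
  rw [← hT, ← hD, ← hm] at hsseq
  have hTlen : T.length < l.length := takeWhileLt l m (max_mem l hlne)
  have hDlen : D.length < l.length := dropWhileDropLt l m hlne
  rcases eq_or_ne m 0 with hm0 | hm0
  · -- max is 0, so l = [0]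
    have : ∀ y ∈ l, y = 0 := by
      intro y hy
      have := le_foldr_max l y hy
      omega
    have hl0 : l = [0] := by
      cases hsplit' : l with
      | nil => exact absurd hsplit' hlne
      | cons a as =>
        have ha : a = 0 := this a (by rw [hsplit']; simp)
        have : as = [] := by
          cases as with
          | nil => rfl
          | cons b bs =>
            have hb : b = 0 := this b (by rw [hsplit']; simp)
            exfalso
            rw [hsplit'] at hnd
            rw [ha, hb] at hnd
            simp at hnd
        rw [ha, this]
    subst hl0
    have hss0 : ss ([0]) = [0] := by
      have h1 : ss ([]:List ℕ) = [] := by rw [ss]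
      rw [ss_cons]
      simp [List.takeWhile, h1]
    rw [hss0]
    simp [pf, List.takeWhile, blocksOf]
  · rcases List.mem_append.1 (hsplit ▸ h0) with h0T | h0D
    · -- 0 before the max: pf l = pf T
      have hpfl : pf l = pf T := by
        rw [hsplit, pf, pf]
        have : (T ++ m :: D).takeWhile (fun x => decide (x ≠ 0)) =
            T.takeWhile (fun x => decide (x ≠ 0)) := pf_append_of_mem _ h0T
        exact this
      have h0ssT : (0:ℕ) ∈ ss T := mem_ss.2 h0T
      have : pf (ss l) = pf (ss T) := by
        rw [hsseq, List.append_assoc]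
        exact pf_append_of_mem _ h0ssT
      rw [this, ih T (by omega) hndT h0T, hpfl]
    · -- max before 0
      rcases List.mem_cons.1 h0D with h00 | h0D
      · exact absurd h00.symm hm0
      have h0T : (0:ℕ) ∉ T := by
        intro h
        rw [hsplit] at hnd
        rw [List.nodup_append'] at hnd
        exact hnd.2.2 h (List.mem_cons_of_mem _ h0D)
      have hmD : m ∉ D := by
        rw [hsplit] at hnd
        rw [List.nodup_append'] at hnd
        exact fun h => (List.nodup_cons.1 hnd.2.1).1 h
      have hTm : ∀ y ∈ T, y < m := by
        intro y hy
        have h1 : y ≤ m := le_foldr_max l y (hTsub.subset hy)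
        have h2 : y ≠ m := by
          have := List.mem_takeWhile_imp (p := fun y => decide (y ≠ m)) hy
          simpa using this
        omega
      have hpfD : ∀ y ∈ pf D, y < m := by
        intro y hy
        have hyD : y ∈ D := (pf_sublist D).subset hy
        have h1 : y ≤ m := le_foldr_max l y (hDsub.subset hyD)
        exact lt_of_le_of_ne h1 (fun h => hmD (h ▸ hyD))
      -- pf l = T ++ m :: pf D
      have hpfconsD : pf (m :: D) = m :: pf D := by
        rw [pf]
        simp only [List.takeWhile_cons]
        rw [if_pos (by simpa using hm0)]
        rfl
      have hpfl : pf l = T ++ m :: pf D := by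
        rw [hsplit, pf_append_of_not_mem _ h0T, hpfconsD]
      -- pf (ss l) = ss T ++ pf (ss D)
      have h0ssD : (0:ℕ) ∈ ss D := mem_ss.2 h0D
      have h0ssT : (0:ℕ) ∉ ss T := fun h => h0T (mem_ss.1 h)
      have hlhs : pf (ss l) = ss T ++ pf (ss D) := by
        rw [hsseq, List.append_assoc, pf_append_of_not_mem _ h0ssT]
        congr 1
        exact pf_append_of_mem _ h0ssD
      rw [hlhs, hpfl, blocksOf_split T (pf D) m hTm hpfD]
      rw [List.map_cons]
      simp only [List.flatten]
      congr 1
      exact ih D (by omega) hndD h0D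

lemma key_struct (l : List ℕ) (hnd : l.Nodup) (h0 : (0:ℕ) ∈ l) :
    pf (ss l) = ((blocksOf (pf l)).map ss).flatten :=
  key_struct_aux l.length l le_rfl hnd h0

end SSAux
namespace SSAux
open List

lemma mem_join_map_ss {bs : List (List ℕ)} {v : ℕ} :
    v ∈ ((bs.map ss).flatten) ↔ v ∈ bs.flatten := by
  induction bs with
  | nil => simp
  | cons b bs ih =>
    simp only [List.map_cons, List.flatten_cons, List.mem_append, ih, mem_ss]

lemma sub_main : ∀ (bs : List (List ℕ)) (cs : List ℕ), bs.length = cs.length →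
    ((bs.map ss).flatten).Nodup → (0:ℕ) ∉ (bs.map ss).flatten →
    ((rtlMax ((bs.map ss).flatten)).map
      (fun c => cs.getD ((bs.map (fun b => b.foldr max 0)).idxOf c) 0)).Sublist cs := by
  intro bs
  induction bs with
  | nil =>
    intro cs hlen _ _
    simp only [List.map_nil, List.flatten]
    simp [rtlMax]
  | cons b bs ih =>
    intro cs hlen hnd h0
    cases cs with
    | nil => simp at hlen
    | cons c cs' =>
      have hlen' : bs.length = cs'.length := by simpa using hlen
      simp only [List.map_cons, List.flatten_cons] at hnd h0 ⊢
      set J' := ((bs.map ss).flatten) with hJ'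
      have hndss : (ss b).Nodup := (List.nodup_append'.1 hnd).1
      have hndJ' : J'.Nodup := (List.nodup_append'.1 hnd).2.1
      have hdisj : (ss b).Disjoint J' := (List.nodup_append'.1 hnd).2.2
      have h0J' : (0:ℕ) ∉ J' := fun h => h0 (List.mem_append.2 (Or.inr h))
      have ihs := ih cs' hlen' hndJ' h0J'
      have hflat : (bs.map ss).flatten = J' := rfl
      rw [rtlMax_append]
      set m := b.foldr max 0 with hm
      have htailmap :
          ((rtlMax J').map
            (fun x => (c :: cs').getD ((m :: bs.map (fun b => b.foldr max 0)).idxOf x) 0)) =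
          ((rtlMax J').map
            (fun x => cs'.getD ((bs.map (fun b => b.foldr max 0)).idxOf x) 0)) := by
        apply List.map_congr_left
        intro x hx
        have hxm : x ≠ m := by
          rcases eq_or_ne b [] with rfl | hbne
          · have : m = 0 := by rw [hm]; rfl
            rw [this]
            exact fun h => h0J' (h ▸ rtlMax_subset hx)
          · have hmss : m ∈ ss b := mem_ss.2 (max_mem b hbne)
            exact fun h => hdisj hmss (h ▸ rtlMax_subset hx)
        rw [List.idxOf_cons_ne _ (Ne.symm hxm)]
        rfl
      rcases eq_or_ne b [] with rfl | hbne
      · -- empty block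
        have hss0 : ss ([]:List ℕ) = [] := by rw [ss]
        rw [hss0]
        simp only [rtlMax, List.filter_nil, List.nil_append, List.map_cons]
        rw [htailmap]
        exact ihs.cons c
      · -- nonempty block
        have hndb : b.Nodup := (ss_perm b).nodup_iff.1 hndss
        rw [rtlMax_ss b hbne hndb, ← hm]
        by_cases hkeep : ∀ y ∈ J', y < m
        · have hf : (([m]).filter (fun x => decide (∀ y ∈ J', y < x))) = [m] := by
            simp only [List.filter_cons, List.filter_nil]
            rw [if_pos (by simpa using hkeep)]
          rw [hf]
          simp only [List.map_cons, List.map_append, List.map_nil]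
          rw [htailmap, List.idxOf_cons_self]
          exact ihs.cons₂ c
        · have hf : (([m]).filter (fun x => decide (∀ y ∈ J', y < x))) = [] := by
            simp only [List.filter_cons, List.filter_nil]
            rw [if_neg (by simpa using hkeep)]
          rw [hf, List.nil_append, htailmap]
          exact ihs.cons c

end SSAux
namespace SSAux
open List

lemma blocksOf_length : ∀ (l : List ℕ), (blocksOf l).length = (rtlMax l).length := by
  intro l
  induction l with
  | nil => simp [blocksOf, rtlMax]
  | cons x xs ih =>
    rw [blocksOf, rtlMax]
    split
    · simp [ih]
    · rename_i h
      have hxs : xs ≠ [] := by rintro rfl; exact h (by simp)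
      have hne := blocksOf_ne_nil xs hxs
      cases hb : blocksOf xs with
      | nil => exact absurd hb hne
      | cons b bs => rw [hb] at ih; simpa using ih

lemma iter_perm (π : List ℕ) (k : ℕ) : (ss^[k] π).Perm π := by
  induction k with
  | zero => rfl
  | succ k ih =>
    rw [Function.iterate_succ_apply']
    exact (ss_perm _).trans ih

lemma iter_nodup {π : List ℕ} (hnd : π.Nodup) (k : ℕ) : (ss^[k] π).Nodup :=
  (iter_perm π k).nodup_iff.2 hnd

lemma iter_mem0 {π : List ℕ} (h0 : (0:ℕ) ∈ π) (k : ℕ) : (0:ℕ) ∈ ss^[k] π :=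
  ((iter_perm π k).mem_iff).2 h0

lemma prefix_step {π : List ℕ} (hnd : π.Nodup) (h0 : (0:ℕ) ∈ π) {j : ℕ} (hj : 1 ≤ j) :
    prefixAt π (j+1) = ((blocksAt π j).map ss).flatten := by
  obtain ⟨k, rfl⟩ : ∃ k, j = k + 1 := ⟨j - 1, by omega⟩
  have h1 : prefixAt π (k+1+1) = pf (ss (ss^[k] π)) := by
    rw [prefixAt_eq]
    congr 1
    simp only [Nat.add_sub_cancel]
    exact Function.iterate_succ_apply' ss k π
  rw [h1, key_struct _ (iter_nodup hnd k) (iter_mem0 h0 k)]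
  rfl

lemma mem_prefix_step {π : List ℕ} (hnd : π.Nodup) (h0 : (0:ℕ) ∈ π) {j : ℕ} (hj : 1 ≤ j)
    {v : ℕ} (hv : v ∈ prefixAt π (j+1)) :
    v ∈ prefixAt π j ∧ v ∉ colSeqAt π j := by
  rw [prefix_step hnd h0 hj] at hv
  have hvb : v ∈ (blocksAt π j).flatten := mem_join_map_ss.1 hv
  have hvp : v ∈ prefixAt π j := blocksOf_join_subset _ v hvb
  refine ⟨hvp, fun hc => ?_⟩
  have hndp : (prefixAt π j).Nodup := (pf_sublist _).nodup (iter_nodup hnd (j-1))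
  exact rtlMax_blocksOf_disjoint _ hndp v hc hvb

lemma prefix_antitone {π : List ℕ} (hnd : π.Nodup) (h0 : (0:ℕ) ∈ π) :
    ∀ {j k : ℕ}, 1 ≤ j → j ≤ k → ∀ {v : ℕ},
    v ∈ prefixAt π k → v ∈ prefixAt π j := by
  intro j k hj hjk
  induction k with
  | zero => omega
  | succ k ih =>
    intro v hv
    rcases eq_or_lt_of_le hjk with rfl | hlt
    · exact hv
    · have hk : 1 ≤ k := by omega
      exact ih (by omega) (mem_prefix_step hnd h0 hk hv).1

lemma col_eq {π : List ℕ} (hnd : π.Nodup) (h0 : (0:ℕ) ∈ π) {i : ℕ} (hi : 1 ≤ i)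
    {c : ℕ} (hc : c ∈ colSeqAt π i) : colOf π c = i := by
  have hmem : i ∈ {i' | 1 ≤ i' ∧ c ∈ colSeqAt π i'} := ⟨hi, hc⟩
  have hlb : ∀ i' ∈ {i' | 1 ≤ i' ∧ c ∈ colSeqAt π i'}, i ≤ i' := by
    rintro i' ⟨hi', hci'⟩
    by_contra hlt
    push_neg at hlt
    have hp : c ∈ prefixAt π (i'+1) :=
      prefix_antitone hnd h0 (j := i'+1) (k := i) (by omega) (by omega) (rtlMax_subset hc)
    exact (mem_prefix_step hnd h0 hi' hp).2 hci'
  have h1 : colOf π c ≤ i := Nat.sInf_le hmem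
  have h2 : colOf π c ∈ {i' | 1 ≤ i' ∧ c ∈ colSeqAt π i'} := Nat.sInf_mem ⟨i, hmem⟩
  exact le_antisymm h1 (hlb _ h2)

end SSAux
namespace SSAux
open List

lemma base_sorted {π : List ℕ} (hnd : π.Nodup) (h0 : (0:ℕ) ∈ π) :
    List.Pairwise (· < ·) ((colSeqAt π 1).map (rowOf π)) := by
  have hndC : (colSeqAt π 1).Nodup := by
    have h1 : (prefixAt π 1).Nodup := (pf_sublist _).nodup (iter_nodup hnd 0)
    exact (rtlMax_sublist _).nodup h1
  have hrow : ∀ c ∈ colSeqAt π 1, rowOf π c = (colSeqAt π 1).idxOf c + 1 := by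
    intro c hc
    have hcol : colOf π c = 1 := col_eq hnd h0 le_rfl hc
    rw [rowOf, hcol]
    simp only [Nat.sub_self, Function.iterate_zero, id_eq]
    rw [colposOf, hcol]
  rw [List.map_congr_left hrow]
  rw [List.pairwise_map]
  rw [List.pairwise_iff_get]
  intro i j hij
  rw [List.get_idxOf hndC, List.get_idxOf hndC]
  omega

lemma step_sorted {π : List ℕ} (hnd : π.Nodup) (h0 : (0:ℕ) ∈ π) {i : ℕ} (hi : 1 ≤ i)
    (ih : List.Pairwise (· < ·) ((colSeqAt π i).map (rowOf π))) :
    List.Pairwise (· < ·) ((colSeqAt π (i+1)).map (rowOf π)) := by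
  set bs := blocksAt π i with hbs
  set cs := colSeqAt π i with hcs
  set f : ℕ → ℕ := fun c => cs.getD ((bs.map (fun b => b.foldr max 0)).idxOf c) 0 with hf
  have hpre : prefixAt π (i+1) = ((bs.map ss).flatten) := prefix_step hnd h0 hi
  have hC' : colSeqAt π (i+1) = rtlMax ((bs.map ss).flatten) := by
    rw [colSeqAt, hpre]
  have hlen : bs.length = cs.length := blocksOf_length _
  have hndJ : ((bs.map ss).flatten).Nodup := by
    rw [← hpre]
    exact (pf_sublist _).nodup (iter_nodup hnd i)
  have h0J : (0:ℕ) ∉ (bs.map ss).flatten := by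
    rw [← hpre]
    exact zero_not_mem_pf _
  have hsub : ((colSeqAt π (i+1)).map f).Sublist cs := by
    rw [hC']
    exact sub_main bs cs hlen hndJ h0J
  have hmemf : ∀ c ∈ colSeqAt π (i+1), f c ∈ cs := by
    intro c hc
    exact hsub.subset (List.mem_map.2 ⟨c, hc, rfl⟩)
  have hcol' : ∀ c ∈ colSeqAt π (i+1), colOf π c = i + 1 := by
    intro c hc
    exact col_eq hnd h0 (by omega) hc
  have hleft : ∀ c ∈ colSeqAt π (i+1), leftOf π c = f c := by
    intro c hc
    rw [leftOf, hcol' c hc]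
    simp only [Nat.add_sub_cancel]
    rfl
  have hrow : ∀ c ∈ colSeqAt π (i+1), rowOf π c = rowOf π (f c) := by
    intro c hc
    obtain ⟨j, rfl⟩ : ∃ j, i = j + 1 := ⟨i - 1, by omega⟩
    have h1 : rowOf π c = colposOf π ((leftOf π)^[j+1] c) := by
      rw [rowOf, hcol' c hc]
      simp only [Nat.add_sub_cancel]
    have h2 : rowOf π (f c) = colposOf π ((leftOf π)^[j] (f c)) := by
      rw [rowOf, col_eq hnd h0 (by omega) (hmemf c hc)]
      simp only [Nat.add_sub_cancel]
    rw [h1, h2, Function.iterate_succ_apply, hleft c hc]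
  rw [List.map_congr_left hrow]
  have hmm : (colSeqAt π (i+1)).map (fun c => rowOf π (f c)) =
      ((colSeqAt π (i+1)).map f).map (rowOf π) := by
    rw [List.map_map]
    rfl
  rw [hmm]
  exact List.Pairwise.sublist (hsub.map (rowOf π)) ih

lemma main_sorted {π : List ℕ} (hnd : π.Nodup) (h0 : (0:ℕ) ∈ π) :
    ∀ {i : ℕ}, 1 ≤ i → List.Pairwise (· < ·) ((colSeqAt π i).map (rowOf π)) := by
  intro i hi
  induction i, hi using Nat.le_induction with
  | base => exact base_sorted hnd h0
  | succ i hi ih => exact step_sorted hnd h0 hi ih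

end SSAux

/-- Lemma 3.15: for `1 ≤ i ≤ met(π)`, the sequence `(row_π(c_{π,i,j}))_j` is strictly
increasing. -/
theorem stmt_10 (n : ℕ) (π : List ℕ) (hπ : π.Perm (List.range (n + 1)))
    (h0 : π.getLast? = some 0) (i : ℕ) (hi : 1 ≤ i) (him : i ≤ met π) :
    List.Pairwise (· < ·) ((colSeqAt π i).map (rowOf π)) := by
  have hnd : π.Nodup := hπ.nodup_iff.2 List.nodup_range
  have h0m : (0:ℕ) ∈ π := hπ.mem_iff.2 (List.mem_range.2 (by omega))
  exact SSAux.main_sorted hnd h0m hi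
end

section
/- Let π ∈ S_n' and i, j ∈ {1,...,n}. If T_π(i) ≥_D T_π(j) in the composition diagram D(α_π), then i ≥ j. -/
namespace SST
open List

lemma le_fmax {l : List ℕ} {a : ℕ} (h : a ∈ l) : a ≤ l.foldr max 0 := by
  induction l with
  | nil => cases h
  | cons x xs ih =>
    rcases mem_cons.mp h with rfl | h
    · exact le_max_left _ _
    · exact (ih h).trans (le_max_right _ _)

lemma fmax_le {l : List ℕ} {m : ℕ} (h : ∀ x ∈ l, x ≤ m) : l.foldr max 0 ≤ m := by
  induction l with
  | nil => exact Nat.zero_le _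
  | cons x xs ih =>
    exact max_le (h x (mem_cons_self)) (ih fun y hy => h y (mem_cons_of_mem _ hy))

lemma fmax_mem {l : List ℕ} (h : l ≠ []) : l.foldr max 0 ∈ l := by
  cases l with
  | nil => exact absurd rfl h
  | cons x xs => exact foldrMaxMem x xs

lemma takeWhile_middle (p : ℕ → Bool) (A B : List ℕ) (b : ℕ)
    (hA : ∀ x ∈ A, p x) (hb : ¬ p b) : (A ++ b :: B).takeWhile p = A := by
  induction A with
  | nil => simp [List.takeWhile_cons, hb]
  | cons a A ih =>
    rw [cons_append, List.takeWhile_cons, if_pos (hA a (mem_cons_self)),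
      ih fun x hx => hA x (mem_cons_of_mem _ hx)]

lemma dropWhile_middle (p : ℕ → Bool) (A B : List ℕ) (b : ℕ)
    (hA : ∀ x ∈ A, p x) (hb : ¬ p b) : (A ++ b :: B).dropWhile p = b :: B := by
  induction A with
  | nil => simp [List.dropWhile_cons, hb]
  | cons a A ih =>
    rw [cons_append, List.dropWhile_cons, if_pos (hA a (mem_cons_self))]
    exact ih fun x hx => hA x (mem_cons_of_mem _ hx)

lemma ss_nil : ss [] = [] := by rw [ss]

lemma ss_cons (x : ℕ) (xs : List ℕ) : ss (x :: xs) =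
    ss ((x :: xs).takeWhile (fun y => y ≠ (x :: xs).foldr max 0)) ++
    ss (((x :: xs).dropWhile (fun y => y ≠ (x :: xs).foldr max 0)).drop 1) ++
    [(x :: xs).foldr max 0] := by
  rw [ss]

lemma ss_eq (l : List ℕ) (hl : l ≠ []) : ss l =
    ss (l.takeWhile (fun y => y ≠ l.foldr max 0)) ++
    ss ((l.dropWhile (fun y => y ≠ l.foldr max 0)).drop 1) ++
    [l.foldr max 0] := by
  cases l with
  | nil => exact absurd rfl hl
  | cons x xs => exact ss_cons x xs

lemma ss_split {L R : List ℕ} {m : ℕ} (hL : ∀ x ∈ L, x < m) (hR : ∀ x ∈ R, x < m) :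
    ss (L ++ m :: R) = ss L ++ ss R ++ [m] := by
  have hmax : (L ++ m :: R).foldr max 0 = m := by
    refine le_antisymm (fmax_le ?_) (le_fmax (by simp))
    intro x hx
    rcases mem_append.mp hx with hx | hx
    · exact (hL x hx).le
    · rcases mem_cons.mp hx with rfl | hx
      · exact le_rfl
      · exact (hR x hx).le
  have hA : ∀ x ∈ L, (fun y => decide (y ≠ m)) x = true := by
    intro x hx; simpa using (hL x hx).ne
  have hb : ¬ ((fun y => decide (y ≠ m)) m = true) := by simp
  have ht : (L ++ m :: R).takeWhile (fun y => y ≠ m) = L := takeWhile_middle _ _ _ _ hA hb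
  have hd : (L ++ m :: R).dropWhile (fun y => y ≠ m) = m :: R := dropWhile_middle _ _ _ _ hA hb
  rw [ss_eq (L ++ m :: R) (by simp), hmax, ht, hd]
  simp

end SST
namespace SST
open List

lemma dropWhile_max_eq (l : List ℕ) (hl : l ≠ []) :
    l.dropWhile (fun y => y ≠ l.foldr max 0) =
      l.foldr max 0 :: (l.dropWhile (fun y => y ≠ l.foldr max 0)).drop 1 := by
  set m := l.foldr max 0 with hm
  have hne : l.dropWhile (fun y => y ≠ m) ≠ [] := by
    intro h; rw [List.dropWhile_eq_nil_iff] at h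
    simpa using h m (fmax_mem hl)
  have hhead := List.head_dropWhile_not (fun y => decide (y ≠ m)) hne
  have h0 : (l.dropWhile (fun y => y ≠ m)).head hne = m := by simpa using hhead
  conv_lhs => rw [← List.cons_head_tail hne, h0]
  rw [List.drop_one]

lemma splitmax (l : List ℕ) (hl : l ≠ []) :
    l = l.takeWhile (fun y => y ≠ l.foldr max 0) ++
      l.foldr max 0 :: (l.dropWhile (fun y => y ≠ l.foldr max 0)).drop 1 := by
  conv_lhs => rw [← List.takeWhile_append_dropWhile (p := fun y => y ≠ l.foldr max 0) (l := l)]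
  rw [← dropWhile_max_eq l hl]

lemma ss_perm (l : List ℕ) : (ss l).Perm l := by
  suffices H : ∀ N, ∀ l : List ℕ, l.length = N → (ss l).Perm l from H l.length l rfl
  intro N
  induction N using Nat.strong_induction_on with
  | _ n ih =>
  intro l hn
  cases l with
  | nil => rw [ss_nil]
  | cons x xs =>
    set l := x :: xs with hlx
    have hl : l ≠ [] := by simp [hlx]
    set m := l.foldr max 0 with hm
    set t := l.takeWhile (fun y => y ≠ m) with htdef
    set d := (l.dropWhile (fun y => y ≠ m)).drop 1 with hddef
    have hsplit : l = t ++ m :: d := splitmax l hl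
    have ht : (ss t).Perm t := ih t.length (hn ▸ takeWhileLt l m (fmax_mem hl)) t rfl
    have hd : (ss d).Perm d := ih d.length (hn ▸ dropWhileDropLt l m hl) d rfl
    have : ss l = ss t ++ ss d ++ [m] := ss_eq l hl
    rw [this]
    calc ss t ++ ss d ++ [m] ~ t ++ (d ++ [m]) := by
          rw [append_assoc]; exact ht.append (hd.append_right [m])
      _ ~ t ++ (m :: d) := (List.perm_append_singleton _ _).append_left t
      _ = l := hsplit.symm

lemma mem_ss {l : List ℕ} {a : ℕ} : a ∈ ss l ↔ a ∈ l := (ss_perm l).mem_iff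

lemma length_ss (l : List ℕ) : (ss l).length = l.length := (ss_perm l).length_eq

lemma ss_last (l : List ℕ) (hl : l ≠ []) : ∃ t, ss l = t ++ [l.foldr max 0] :=
  ⟨_, ss_eq l hl⟩

end SST
namespace SST
open List

lemma rtlMax_nil : rtlMax [] = [] := by rw [rtlMax]

lemma rtlMax_cons_pos {x : ℕ} {xs : List ℕ} (h : ∀ y ∈ xs, y < x) :
    rtlMax (x :: xs) = x :: rtlMax xs := by rw [rtlMax, if_pos h]

lemma rtlMax_cons_neg {x : ℕ} {xs : List ℕ} (h : ¬ ∀ y ∈ xs, y < x) :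
    rtlMax (x :: xs) = rtlMax xs := by rw [rtlMax, if_neg h]

lemma rtlMax_subset {l : List ℕ} {v : ℕ} (h : v ∈ rtlMax l) : v ∈ l := by
  induction l with
  | nil => rw [rtlMax_nil] at h; cases h
  | cons x xs ih =>
    by_cases hc : ∀ y ∈ xs, y < x
    · rw [rtlMax_cons_pos hc] at h
      rcases mem_cons.mp h with rfl | h
      · exact mem_cons_self
      · exact mem_cons_of_mem _ (ih h)
    · rw [rtlMax_cons_neg hc] at h
      exact mem_cons_of_mem _ (ih h)

lemma rtlMax_pairwise (l : List ℕ) : (rtlMax l).Pairwise (· > ·) := by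
  induction l with
  | nil => rw [rtlMax_nil]; exact Pairwise.nil
  | cons x xs ih =>
    by_cases hc : ∀ y ∈ xs, y < x
    · rw [rtlMax_cons_pos hc]
      exact ih.cons (fun y hy => hc y (rtlMax_subset hy))
    · rw [rtlMax_cons_neg hc]; exact ih

lemma rtlMax_nodup (l : List ℕ) : (rtlMax l).Nodup :=
  (rtlMax_pairwise l).imp (fun h => ne_of_gt h)

lemma rtlMax_ne_nil {l : List ℕ} (h : l ≠ []) : rtlMax l ≠ [] := by
  induction l with
  | nil => exact absurd rfl h
  | cons x xs ih =>
    by_cases hc : ∀ y ∈ xs, y < x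
    · rw [rtlMax_cons_pos hc]; exact cons_ne_nil _ _
    · rw [rtlMax_cons_neg hc]
      refine ih ?_
      intro hxs; exact hc (by simp [hxs])

lemma rtlMax_split {l : List ℕ} {v : ℕ} (h : v ∈ rtlMax l) :
    ∃ A B, l = A ++ v :: B ∧ ∀ w ∈ B, w < v := by
  induction l with
  | nil => rw [rtlMax_nil] at h; cases h
  | cons x xs ih =>
    by_cases hc : ∀ y ∈ xs, y < x
    · rw [rtlMax_cons_pos hc] at h
      rcases mem_cons.mp h with rfl | h
      · exact ⟨[], xs, rfl, hc⟩
      · obtain ⟨A, B, rfl, hB⟩ := ih h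
        exact ⟨x :: A, B, rfl, hB⟩
    · rw [rtlMax_cons_neg hc] at h
      obtain ⟨A, B, rfl, hB⟩ := ih h
      exact ⟨x :: A, B, rfl, hB⟩

lemma mem_rtlMax_of_split (A B : List ℕ) (v : ℕ) (hB : ∀ w ∈ B, w < v) :
    v ∈ rtlMax (A ++ v :: B) := by
  induction A with
  | nil =>
    rw [nil_append, rtlMax_cons_pos hB]; exact mem_cons_self
  | cons a A ih =>
    rw [cons_append]
    by_cases hc : ∀ y ∈ A ++ v :: B, y < a
    · rw [rtlMax_cons_pos hc]; exact mem_cons_of_mem _ ih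
    · rw [rtlMax_cons_neg hc]; exact ih

lemma split_unique {l A B A' B' : List ℕ} {v : ℕ} (hnd : l.Nodup)
    (h1 : l = A ++ v :: B) (h2 : l = A' ++ v :: B') : A = A' ∧ B = B' := by
  have hvA : v ∉ A := by
    intro hv
    have := h1 ▸ hnd
    rw [List.nodup_middle] at this
    exact (List.nodup_cons.mp this).1 (mem_append_left _ hv)
  have hvA' : v ∉ A' := by
    intro hv
    have := h2 ▸ hnd
    rw [List.nodup_middle] at this
    exact (List.nodup_cons.mp this).1 (mem_append_left _ hv)
  have pA : ∀ x ∈ A, (fun y => decide (y ≠ v)) x = true := by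
    intro x hx; simp; rintro rfl; exact hvA hx
  have pA' : ∀ x ∈ A', (fun y => decide (y ≠ v)) x = true := by
    intro x hx; simp; rintro rfl; exact hvA' hx
  have pv : ¬ ((fun y => decide (y ≠ v)) v = true) := by simp
  have e1 : l.takeWhile (fun y => decide (y ≠ v)) = A := h1 ▸ takeWhile_middle _ _ _ _ pA pv
  have e2 : l.takeWhile (fun y => decide (y ≠ v)) = A' := h2 ▸ takeWhile_middle _ _ _ _ pA' pv
  have d1 : l.dropWhile (fun y => decide (y ≠ v)) = v :: B := h1 ▸ dropWhile_middle _ _ _ _ pA pv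
  have d2 : l.dropWhile (fun y => decide (y ≠ v)) = v :: B' := h2 ▸ dropWhile_middle _ _ _ _ pA' pv
  exact ⟨e1.symm.trans e2, by injection d1.symm.trans d2⟩

lemma rtlMax_getD_zero (l : List ℕ) : (rtlMax l).getD 0 0 = l.foldr max 0 := by
  induction l with
  | nil => rw [rtlMax_nil]; rfl
  | cons x xs ih =>
    by_cases hc : ∀ y ∈ xs, y < x
    · rw [rtlMax_cons_pos hc]
      show x = max x _
      exact (max_eq_left (fmax_le fun y hy => (hc y hy).le)).symm
    · rw [rtlMax_cons_neg hc, ih]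
      push_neg at hc
      obtain ⟨y, hy, hxy⟩ := hc
      show _ = max x _
      exact (max_eq_right (hxy.trans (le_fmax hy))).symm

lemma blocksOf_nil : blocksOf [] = [] := by rw [blocksOf]

lemma blocksOf_cons_pos {x : ℕ} {xs : List ℕ} (h : ∀ y ∈ xs, y < x) :
    blocksOf (x :: xs) = [] :: blocksOf xs := by rw [blocksOf, if_pos h]

lemma blocksOf_cons_neg {x : ℕ} {xs : List ℕ} {b : List ℕ} {bs : List (List ℕ)}
    (h : ¬ ∀ y ∈ xs, y < x) (hb : blocksOf xs = b :: bs) :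
    blocksOf (x :: xs) = (x :: b) :: bs := by
  rw [blocksOf, if_neg h, hb]

lemma blocksOf_ne_nil {l : List ℕ} (h : l ≠ []) : blocksOf l ≠ [] := by
  induction l with
  | nil => exact absurd rfl h
  | cons x xs ih =>
    by_cases hc : ∀ y ∈ xs, y < x
    · rw [blocksOf_cons_pos hc]; exact cons_ne_nil _ _
    · have hxs : xs ≠ [] := by intro hxs; exact hc (by simp [hxs])
      obtain ⟨b, bs, hb⟩ := List.exists_cons_of_ne_nil (ih hxs)
      rw [blocksOf_cons_neg hc hb]; exact cons_ne_nil _ _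

lemma length_blocksOf (l : List ℕ) : (blocksOf l).length = (rtlMax l).length := by
  induction l with
  | nil => simp [blocksOf_nil, rtlMax_nil]
  | cons x xs ih =>
    by_cases hc : ∀ y ∈ xs, y < x
    · rw [blocksOf_cons_pos hc, rtlMax_cons_pos hc]; simpa using ih
    · have hxs : xs ≠ [] := by intro hxs; exact hc (by simp [hxs])
      obtain ⟨b, bs, hb⟩ := List.exists_cons_of_ne_nil (blocksOf_ne_nil hxs)
      rw [blocksOf_cons_neg hc hb, rtlMax_cons_neg hc, ← ih, hb]
      rfl

lemma perm0 (l : List ℕ) : (rtlMax l ++ (blocksOf l).flatten).Perm l := by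
  induction l with
  | nil => rw [blocksOf_nil, rtlMax_nil]; rfl
  | cons x xs ih =>
    by_cases hc : ∀ y ∈ xs, y < x
    · rw [blocksOf_cons_pos hc, rtlMax_cons_pos hc]
      simpa using ih.cons x
    · have hxs : xs ≠ [] := by intro hxs; exact hc (by simp [hxs])
      obtain ⟨b, bs, hb⟩ := List.exists_cons_of_ne_nil (blocksOf_ne_nil hxs)
      rw [blocksOf_cons_neg hc hb, rtlMax_cons_neg hc]
      have : rtlMax xs ++ ((x :: b) :: bs).flatten = rtlMax xs ++ x :: (b :: bs).flatten := by
        simp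
      rw [this]
      calc rtlMax xs ++ x :: (b :: bs).flatten ~ x :: (rtlMax xs ++ (b :: bs).flatten) :=
            List.perm_middle
        _ ~ x :: xs := (hb ▸ ih).cons x

lemma blk_lt (l : List ℕ) (hnd : l.Nodup) :
    ∀ j, ∀ x ∈ (blocksOf l).getD j [], x < (rtlMax l).getD j 0 := by
  induction l with
  | nil => intro j x hx; rw [blocksOf_nil] at hx; simp at hx
  | cons z xs ih =>
    intro j x hx
    by_cases hc : ∀ y ∈ xs, y < z
    · rw [blocksOf_cons_pos hc] at hx
      rw [rtlMax_cons_pos hc]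
      cases j with
      | zero => simp at hx
      | succ j => exact ih (List.nodup_cons.mp hnd).2 j x hx
    · have hxs : xs ≠ [] := by intro hxs; exact hc (by simp [hxs])
      obtain ⟨b, bs, hb⟩ := List.exists_cons_of_ne_nil (blocksOf_ne_nil hxs)
      rw [blocksOf_cons_neg hc hb] at hx
      rw [rtlMax_cons_neg hc]
      have ihx := ih (List.nodup_cons.mp hnd).2
      cases j with
      | zero =>
        rcases mem_cons.mp hx with rfl | hx
        · rw [rtlMax_getD_zero]
          push_neg at hc
          obtain ⟨y, hy, hzy⟩ := hc
          have hzy' : x < y := lt_of_le_of_ne hzy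
            (fun h => (List.nodup_cons.mp hnd).1 (h ▸ hy))
          exact hzy'.trans_le (le_fmax hy)
        · have := ihx 0 x (by rw [hb]; exact hx)
          exact this
      | succ j =>
        have := ihx (j+1) x (by rw [hb]; exact hx)
        exact this

lemma rtlMax_append_max {A B : List ℕ} {m : ℕ} (hA : ∀ x ∈ A, x < m) (hB : ∀ x ∈ B, x < m) :
    rtlMax (A ++ m :: B) = m :: rtlMax B := by
  induction A with
  | nil => rw [nil_append, rtlMax_cons_pos hB]
  | cons a A ih =>
    rw [cons_append, rtlMax_cons_neg, ih fun x hx => hA x (mem_cons_of_mem _ hx)]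
    intro hall
    exact absurd (hall m (by simp)) (not_lt.mpr (hA a (mem_cons_self)).le)

lemma blocksOf_append_max {A B : List ℕ} {m : ℕ} (hA : ∀ x ∈ A, x < m) (hB : ∀ x ∈ B, x < m) :
    blocksOf (A ++ m :: B) = A :: blocksOf B := by
  induction A with
  | nil => rw [nil_append, blocksOf_cons_pos hB]
  | cons a A ih =>
    rw [cons_append, blocksOf_cons_neg _ (ih fun x hx => hA x (mem_cons_of_mem _ hx))]
    intro hall
    exact absurd (hall m (by simp)) (not_lt.mpr (hA a (mem_cons_self)).le)

end SST
namespace SST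
open List

lemma ss_single (a : ℕ) : ss [a] = [a] := by
  have h := ss_eq [a] (by simp)
  have h1 : ([a] : List ℕ).foldr max 0 = a := by simp
  rw [h1] at h
  have h2 : ([a] : List ℕ).takeWhile (fun y => y ≠ a) = [] := by
    simp [List.takeWhile_cons]
  have h3 : ([a] : List ℕ).dropWhile (fun y => y ≠ a) = [a] := by
    simp [List.dropWhile_cons]
  rw [h2, h3] at h
  simpa [ss_nil] using h

lemma sorted_last {R : List ℕ} {r : ℕ} (h : (R ++ [r]).Pairwise (· < ·)) :
    ∀ x ∈ R, x < r := by
  rw [List.pairwise_append] at h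
  exact fun x hx => h.2.2 x hx r (by simp)

lemma main (P R : List ℕ) (hnd : (P ++ 0 :: R).Nodup) (hsort : R.Pairwise (· < ·)) :
    ∃ R', R'.Pairwise (· < ·) ∧ (∀ x, x ∈ R' ↔ x ∈ rtlMax P ∨ x ∈ R) ∧
      ss (P ++ 0 :: R) = ((blocksOf P).map ss).flatten ++ 0 :: R' := by
  suffices H : ∀ N, ∀ P R : List ℕ, P.length + R.length ≤ N →
      (P ++ 0 :: R).Nodup → R.Pairwise (· < ·) →
      ∃ R', R'.Pairwise (· < ·) ∧ (∀ x, x ∈ R' ↔ x ∈ rtlMax P ∨ x ∈ R) ∧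
        ss (P ++ 0 :: R) = ((blocksOf P).map ss).flatten ++ 0 :: R' from
    H (P.length + R.length) P R le_rfl hnd hsort
  intro N
  induction N using Nat.strong_induction_on with
  | _ N ih =>
  intro P R hlen hnd hnsort
  have hndm : 0 ∉ P ++ R ∧ (P ++ R).Nodup := by
    have := hnd; rw [List.nodup_middle] at this; exact List.nodup_cons.mp this
  have h0P : (0 : ℕ) ∉ P := fun h => hndm.1 (mem_append_left _ h)
  have h0R : (0 : ℕ) ∉ R := fun h => hndm.1 (mem_append_right _ h)
  have hdisj : ∀ x, x ∈ P → x ∈ R → False := by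
    intro x hx hxR
    exact (List.disjoint_of_nodup_append hndm.2) hx hxR
  set m := P.foldr max 0 with hm
  by_cases hA : ∀ x ∈ R, x < m
  · by_cases hP : P = []
    · -- base case : P = [] forces R = []
      subst hP
      have hR : R = [] := by
        cases R with
        | nil => rfl
        | cons a as =>
          exact absurd (hA a (mem_cons_self)) (by simp [hm])
      subst hR
      refine ⟨[], by simp, by simp [rtlMax_nil], ?_⟩
      simp [blocksOf_nil, ss_single]
    · -- CORE case
      have hmP : m ∈ P := fmax_mem hP
      obtain ⟨t, d, hPtd, ht, hd⟩ :
          ∃ t d, P = t ++ m :: d ∧ (∀ x ∈ t, x < m) ∧ (∀ x ∈ d, x < m) := by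
        have hsp := splitmax P hP
        refine ⟨_, _, hsp, ?_, ?_⟩
        · intro x hx
          have hxm : x ≠ m := by simpa using List.mem_takeWhile_imp hx
          have : x ∈ P := by rw [hsp]; exact mem_append_left _ hx
          exact lt_of_le_of_ne (le_fmax this) hxm
        · intro x hx
          have hxP : x ∈ P := by
            rw [hsp]; exact mem_append_right _ (mem_cons_of_mem _ hx)
          have hPnd : P.Nodup := (List.Nodup.sublist (List.sublist_append_left _ _) hnd)
          have h2 := hsp ▸ hPnd
          rw [List.nodup_middle] at h2
          have hmd := (List.nodup_cons.mp h2).1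
          exact lt_of_le_of_ne (le_fmax hxP) (fun h => hmd (mem_append_right _ (by rw [h] at hx; exact hx)))
      have hm0 : 0 < m := Nat.pos_of_ne_zero (fun h => h0P (h ▸ hmP))
      have hassoc : P ++ 0 :: R = t ++ m :: (d ++ 0 :: R) := by
        rw [hPtd]; simp
      have hsub : (d ++ 0 :: R).Nodup := by
        refine List.Nodup.sublist ?_ hnd
        rw [hassoc]
        exact (List.sublist_cons_self _ _).trans (List.sublist_append_right _ _)
      have hlt : ∀ x ∈ d ++ 0 :: R, x < m := by
        intro x hx
        rcases mem_append.mp hx with hx | hx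
        · exact hd x hx
        · rcases mem_cons.mp hx with rfl | hx
          · exact hm0
          · exact hA x hx
      have hssplit : ss (P ++ 0 :: R) = ss t ++ ss (d ++ 0 :: R) ++ [m] := by
        rw [hassoc]; exact ss_split ht hlt
      have hlen' : d.length + R.length < N := by
        have : P.length = t.length + d.length + 1 := by rw [hPtd]; simp; omega
        omega
      obtain ⟨R₂, hR₂sort, hR₂mem, hR₂eq⟩ :=
        ih _ hlen' d R le_rfl hsub hnsort
      refine ⟨R₂ ++ [m], ?_, ?_, ?_⟩
      · rw [List.pairwise_append]
        refine ⟨hR₂sort, by simp, ?_⟩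
        intro x hx y hy
        rw [mem_singleton] at hy
        subst hy
        rcases (hR₂mem x).mp hx with hx | hx
        · exact hd x (rtlMax_subset hx)
        · exact hA x hx
      · intro x
        rw [hPtd, rtlMax_append_max ht hd]
        simp only [mem_append, mem_singleton, mem_cons]
        rw [hR₂mem x]
        tauto
      · rw [hssplit, hR₂eq, hPtd, blocksOf_append_max ht hd]
        simp [List.append_assoc]
  · -- CASE A : strip the last element of R
    have hRne : R ≠ [] := by
      intro h; subst h; exact hA (by simp)
    set r := R.getLast hRne with hr
    have hRsplit : R.dropLast ++ [r] = R := List.dropLast_append_getLast hRne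
    have hrR : r ∈ R := List.getLast_mem hRne
    have hsort' : (R.dropLast ++ [r]).Pairwise (· < ·) := hRsplit.symm ▸ hnsort
    have hlast : ∀ x ∈ R.dropLast, x < r := sorted_last hsort'
    have hmr : m < r := by
      push_neg at hA
      obtain ⟨x, hxR, hmx⟩ := hA
      have hxR' : x ∈ R.dropLast ++ [r] := by
        conv at hxR => rw [← hRsplit]
        exact hxR
      have hxr : x ≤ r := by
        rcases mem_append.mp hxR' with h | h
        · exact (hlast x h).le
        · simp at h; omega
      have hrm : r ≠ m := by
        intro h
        rcases Nat.eq_zero_or_pos m with h0 | h0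
        · exact absurd (h.trans h0) (fun hh => h0R (hh ▸ hrR))
        · exact hdisj m (fmax_mem (fun hh => by simp [hm, hh] at h0)) (h ▸ hrR)
      omega
    have halllt : ∀ x ∈ P ++ 0 :: R.dropLast, x < r := by
      intro x hx
      rcases mem_append.mp hx with hx | hx
      · exact lt_of_le_of_lt (le_fmax hx) hmr
      · rcases mem_cons.mp hx with rfl | hx
        · rcases Nat.eq_zero_or_pos r with h0 | h0
          · exact absurd (h0 ▸ hrR) h0R
          · exact h0
        · exact hlast x hx
    have heq1 : P ++ 0 :: R = (P ++ 0 :: R.dropLast) ++ r :: [] := by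
      rw [← hRsplit]; simp
    have hss : ss (P ++ 0 :: R) = ss (P ++ 0 :: R.dropLast) ++ [r] := by
      rw [heq1, ss_split halllt (by simp), ss_nil]
      simp
    have hndd : (P ++ 0 :: R.dropLast).Nodup := by
      refine List.Nodup.sublist ?_ hnd
      exact List.Sublist.append_left (List.Sublist.cons₂ 0 (List.dropLast_sublist R)) P
    have hsortd : R.dropLast.Pairwise (· < ·) :=
      hnsort.sublist (List.dropLast_sublist R)
    have hlen' : P.length + R.dropLast.length < N := by
      have h1 : R.length = R.dropLast.length + 1 := by
        rw [← hRsplit]; simp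
      omega
    obtain ⟨R₂, hR₂sort, hR₂mem, hR₂eq⟩ :=
      ih _ hlen' P R.dropLast le_rfl hndd hsortd
    refine ⟨R₂ ++ [r], ?_, ?_, ?_⟩
    · rw [List.pairwise_append]
      refine ⟨hR₂sort, by simp, ?_⟩
      intro x hx y hy
      rw [mem_singleton] at hy
      subst hy
      rcases (hR₂mem x).mp hx with hx | hx
      · exact lt_of_le_of_lt (le_fmax (rtlMax_subset hx)) hmr
      · exact hlast x hx
    · intro x
      have hmem : x ∈ R ↔ x ∈ R.dropLast ∨ x = r := by
        conv_lhs => rw [← hRsplit]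
        simp
      simp only [mem_append, mem_singleton]
      rw [hR₂mem x, hmem]
      tauto
    · rw [hss, hR₂eq]
      simp [List.append_assoc]

end SST
namespace SST
open List

/-- The prefix of `s^k(π)` before `0` (note `pfxl π k = prefixAt π (k+1)`). -/
def pfxl (π : List ℕ) (k : ℕ) : List ℕ := prefixAt π (k+1)

lemma pfxl_def (π : List ℕ) (k : ℕ) :
    pfxl π k = (ss^[k] π).takeWhile (fun x => x ≠ 0) := rfl

lemma colSeqAt_eq (π : List ℕ) (k : ℕ) : colSeqAt π (k+1) = rtlMax (pfxl π k) := rfl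

lemma blocksAt_eq (π : List ℕ) (k : ℕ) : blocksAt π (k+1) = blocksOf (pfxl π k) := rfl

variable {n : ℕ} {π : List ℕ}

lemma iter_perm (hπ : π.Perm (List.range (n + 1))) (k : ℕ) :
    (ss^[k] π).Perm (List.range (n + 1)) := by
  induction k with
  | zero => exact hπ
  | succ k ih =>
    rw [Function.iterate_succ_apply']
    exact (ss_perm _).trans ih

lemma iter_nodup (hπ : π.Perm (List.range (n + 1))) (k : ℕ) : (ss^[k] π).Nodup :=
  ((iter_perm hπ k).nodup_iff).mpr (List.nodup_range)

lemma pfxl_nodup (hπ : π.Perm (List.range (n + 1))) (k : ℕ) : (pfxl π k).Nodup :=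
  (List.takeWhile_sublist _).nodup (iter_nodup hπ k)

lemma zero_not_mem_pfxl (k : ℕ) : (0 : ℕ) ∉ pfxl π k := by
  intro h
  have := List.mem_takeWhile_imp h
  simp at this

lemma mem_pfxl_ne_zero {k v} (h : v ∈ pfxl π k) : v ≠ 0 := by
  intro h0; exact zero_not_mem_pfxl k (h0 ▸ h)

lemma inv (hπ : π.Perm (List.range (n + 1))) (h0 : π.getLast? = some 0) (k : ℕ) :
    ∃ R, ss^[k] π = pfxl π k ++ 0 :: R ∧ R.Pairwise (· < ·) := by
  induction k with
  | zero =>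
    have hne : π ≠ [] := by intro h; rw [h] at h0; simp at h0
    have hlast : π.getLast hne = 0 := by
      have := List.getLast?_eq_getLast hne
      rw [this] at h0
      exact Option.some_injective _ h0.symm |>.symm
    have hsplit : π.dropLast ++ [0] = π := by
      rw [← hlast]; exact List.dropLast_append_getLast hne
    have hnd : π.Nodup := (hπ.nodup_iff).mpr (List.nodup_range)
    have h0d : (0:ℕ) ∉ π.dropLast := by
      intro h
      have := hsplit ▸ hnd
      rw [List.nodup_append] at this
      exact this.2.2 _ h _ (by simp) rfl
    have hpfx : pfxl π 0 = π.dropLast := by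
      rw [pfxl_def]
      show π.takeWhile _ = _
      conv_lhs => rw [← hsplit]
      refine takeWhile_middle _ _ _ _ ?_ (by simp)
      intro x hx
      simp only [decide_eq_true_eq]
      intro hx0; exact h0d (hx0 ▸ hx)
    refine ⟨[], ?_, by simp⟩
    rw [Function.iterate_zero_apply, hpfx]
    exact hsplit.symm
  | succ k ih =>
    obtain ⟨R, hR, hRs⟩ := ih
    have hnd : (pfxl π k ++ 0 :: R).Nodup := hR ▸ iter_nodup hπ k
    obtain ⟨R', hR's, hR'mem, hR'eq⟩ := main (pfxl π k) R hnd hRs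
    have heq : ss^[k+1] π = ((blocksOf (pfxl π k)).map ss).flatten ++ 0 :: R' := by
      rw [Function.iterate_succ_apply', hR, hR'eq]
    have h0J : ∀ x ∈ ((blocksOf (pfxl π k)).map ss).flatten, x ≠ 0 := by
      intro x hx
      rw [List.mem_flatten] at hx
      obtain ⟨L, hL, hxL⟩ := hx
      rw [List.mem_map] at hL
      obtain ⟨b, hb, rfl⟩ := hL
      have hxb : x ∈ b := mem_ss.mp hxL
      have hxj : x ∈ (blocksOf (pfxl π k)).flatten := List.mem_flatten.mpr ⟨b, hb, hxb⟩
      have hxp : x ∈ pfxl π k := (perm0 _).subset (mem_append_right _ hxj)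
      exact mem_pfxl_ne_zero hxp
    have hpfx : pfxl π (k+1) = ((blocksOf (pfxl π k)).map ss).flatten := by
      rw [pfxl_def, heq]
      refine takeWhile_middle _ _ _ _ ?_ (by simp)
      intro x hx
      simpa using h0J x hx
    exact ⟨R', by rw [heq, hpfx], hR's⟩

lemma pfxl_succ (hπ : π.Perm (List.range (n + 1))) (h0 : π.getLast? = some 0) (k : ℕ) :
    pfxl π (k+1) = ((blocksOf (pfxl π k)).map ss).flatten := by
  obtain ⟨R, hR, hRs⟩ := inv hπ h0 k
  have hnd : (pfxl π k ++ 0 :: R).Nodup := hR ▸ iter_nodup hπ k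
  obtain ⟨R', hR's, hR'mem, hR'eq⟩ := main (pfxl π k) R hnd hRs
  have heq : ss^[k+1] π = ((blocksOf (pfxl π k)).map ss).flatten ++ 0 :: R' := by
    rw [Function.iterate_succ_apply', hR, hR'eq]
  have h0J : ∀ x ∈ ((blocksOf (pfxl π k)).map ss).flatten, x ≠ 0 := by
    intro x hx
    rw [List.mem_flatten] at hx
    obtain ⟨L, hL, hxL⟩ := hx
    rw [List.mem_map] at hL
    obtain ⟨b, hb, rfl⟩ := hL
    have hxb : x ∈ b := mem_ss.mp hxL
    have hxj : x ∈ (blocksOf (pfxl π k)).flatten := List.mem_flatten.mpr ⟨b, hb, hxb⟩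
    have hxp : x ∈ pfxl π k := (perm0 _).subset (mem_append_right _ hxj)
    exact mem_pfxl_ne_zero hxp
  rw [pfxl_def, heq]
  refine takeWhile_middle _ _ _ _ ?_ (by simp)
  intro x hx
  simpa using h0J x hx

lemma mem_pfxl_succ_iff (hπ : π.Perm (List.range (n + 1))) (h0 : π.getLast? = some 0)
    (k : ℕ) (x : ℕ) :
    x ∈ pfxl π (k+1) ↔ x ∈ (blocksOf (pfxl π k)).flatten := by
  rw [pfxl_succ hπ h0 k]
  constructor
  · intro hx
    rw [List.mem_flatten] at hx
    obtain ⟨L, hL, hxL⟩ := hx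
    rw [List.mem_map] at hL
    obtain ⟨b, hb, rfl⟩ := hL
    exact List.mem_flatten.mpr ⟨b, hb, mem_ss.mp hxL⟩
  · intro hx
    rw [List.mem_flatten] at hx
    obtain ⟨b, hb, hxb⟩ := hx
    exact List.mem_flatten.mpr ⟨ss b, List.mem_map.mpr ⟨b, hb, rfl⟩, mem_ss.mpr hxb⟩

lemma pfxl_mono (hπ : π.Perm (List.range (n + 1))) (h0 : π.getLast? = some 0)
    {k : ℕ} {x : ℕ} (hx : x ∈ pfxl π (k+1)) : x ∈ pfxl π k := by
  rw [mem_pfxl_succ_iff hπ h0] at hx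
  exact (perm0 _).subset (mem_append_right _ hx)

lemma mem_rtl_iff (hπ : π.Perm (List.range (n + 1))) (h0 : π.getLast? = some 0)
    (k : ℕ) (v : ℕ) :
    v ∈ rtlMax (pfxl π k) ↔ v ∈ pfxl π k ∧ v ∉ pfxl π (k+1) := by
  have hnd : (rtlMax (pfxl π k) ++ (blocksOf (pfxl π k)).flatten).Nodup :=
    ((perm0 (pfxl π k)).nodup_iff).mpr (pfxl_nodup hπ k)
  have hdisj := List.disjoint_of_nodup_append hnd
  rw [mem_pfxl_succ_iff hπ h0]
  constructor
  · intro hv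
    exact ⟨rtlMax_subset hv, fun hj => hdisj hv hj⟩
  · rintro ⟨hv, hnj⟩
    rcases mem_append.mp ((perm0 (pfxl π k)).mem_iff.mpr hv) with h | h
    · exact h
    · exact absurd h hnj

lemma pfxl_length (hπ : π.Perm (List.range (n + 1))) (h0 : π.getLast? = some 0)
    {k : ℕ} (hne : pfxl π k ≠ []) : (pfxl π (k+1)).length < (pfxl π k).length := by
  have hlen : (pfxl π (k+1)).length = ((blocksOf (pfxl π k)).flatten).length := by
    rw [pfxl_succ hπ h0 k]
    rw [List.length_flatten, List.length_flatten, List.map_map]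
    congr 1
    exact List.map_congr_left (fun b _ => length_ss b)
  have hperm := (perm0 (pfxl π k)).length_eq
  rw [List.length_append] at hperm
  have hrne : rtlMax (pfxl π k) ≠ [] := rtlMax_ne_nil hne
  have : 0 < (rtlMax (pfxl π k)).length := List.length_pos_iff.mpr hrne
  omega

end SST
namespace SST
open List

variable {n : ℕ} {π : List ℕ}

lemma pfxl_mono_le (hπ : π.Perm (List.range (n + 1))) (h0 : π.getLast? = some 0)
    {k m : ℕ} (hm : m ≤ k) {v : ℕ} (hv : v ∈ pfxl π k) : v ∈ pfxl π m := by
  induction k with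
  | zero => rw [Nat.le_zero.mp hm]; exact hv
  | succ k ih =>
    rcases Nat.lt_or_ge m (k+1) with h | h
    · exact ih (by omega) (pfxl_mono hπ h0 hv)
    · have : m = k + 1 := by omega
      rw [this]; exact hv

lemma pfxl_not_mem_ge (hπ : π.Perm (List.range (n + 1))) (h0 : π.getLast? = some 0)
    {k m : ℕ} (hm : k ≤ m) {v : ℕ} (hv : v ∉ pfxl π k) : v ∉ pfxl π m :=
  fun h => hv (pfxl_mono_le hπ h0 hm h)

lemma exists_not_mem_pfxl (hπ : π.Perm (List.range (n + 1))) (h0 : π.getLast? = some 0)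
    (v : ℕ) : ∃ k, v ∉ pfxl π k := by
  by_contra hall
  push_neg at hall
  have hlen : ∀ k, (pfxl π k).length + k ≤ (pfxl π 0).length := by
    intro k
    induction k with
    | zero => omega
    | succ k ih =>
      have hne : pfxl π k ≠ [] := List.ne_nil_of_mem (hall k)
      have := pfxl_length hπ h0 hne
      omega
  have h1 := hlen ((pfxl π 0).length + 1)
  have h2 : 0 < (pfxl π ((pfxl π 0).length + 1)).length :=
    List.length_pos_iff.mpr (List.ne_nil_of_mem (hall _))
  omega

/-- The exit time of `v`. -/
noncomputable def exitK (π : List ℕ) (v : ℕ) : ℕ := sInf {k | v ∉ pfxl π k}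

lemma exitK_spec (hπ : π.Perm (List.range (n + 1))) (h0 : π.getLast? = some 0)
    {v : ℕ} (hv0 : v ∈ pfxl π 0) :
    1 ≤ exitK π v ∧ ∀ k, (v ∈ pfxl π k ↔ k < exitK π v) := by
  have hne : {k | v ∉ pfxl π k}.Nonempty := exists_not_mem_pfxl hπ h0 v
  have hmem : v ∉ pfxl π (exitK π v) := Nat.sInf_mem hne
  have h1 : 1 ≤ exitK π v := by
    rcases Nat.eq_zero_or_pos (exitK π v) with h | h
    · exact absurd (h ▸ hmem) (by simp [hv0])
    · exact h
  refine ⟨h1, fun k => ⟨?_, ?_⟩⟩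
  · intro hvk
    by_contra hk
    push_neg at hk
    exact (pfxl_not_mem_ge hπ h0 hk hmem) hvk
  · intro hk
    by_contra hvk
    have h2 : exitK π v ≤ k := Nat.sInf_le hvk
    omega

lemma mem_rtl_iff_exitK (hπ : π.Perm (List.range (n + 1))) (h0 : π.getLast? = some 0)
    {v : ℕ} (hv0 : v ∈ pfxl π 0) (k : ℕ) :
    v ∈ rtlMax (pfxl π k) ↔ k + 1 = exitK π v := by
  obtain ⟨h1, hiff⟩ := exitK_spec hπ h0 hv0
  rw [mem_rtl_iff hπ h0, hiff k, hiff (k+1)]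
  omega

lemma colOf_eq_exitK (hπ : π.Perm (List.range (n + 1))) (h0 : π.getLast? = some 0)
    {v : ℕ} (hv0 : v ∈ pfxl π 0) : colOf π v = exitK π v := by
  obtain ⟨h1, _⟩ := exitK_spec hπ h0 hv0
  have hset : {i | 1 ≤ i ∧ v ∈ colSeqAt π i} = {exitK π v} := by
    ext i
    simp only [Set.mem_setOf_eq, Set.mem_singleton_iff]
    constructor
    · rintro ⟨hi, hmem⟩
      obtain ⟨i', rfl⟩ := Nat.exists_eq_add_of_le hi
      rw [show 1 + i' = i' + 1 by omega, colSeqAt_eq] at hmem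
      have := (mem_rtl_iff_exitK hπ h0 hv0 i').mp hmem
      omega
    · rintro rfl
      refine ⟨h1, ?_⟩
      have hk : exitK π v - 1 + 1 = exitK π v := by omega
      rw [← hk, colSeqAt_eq, mem_rtl_iff_exitK hπ h0 hv0]
      omega
  rw [colOf, hset]
  have hne : ({exitK π v} : Set ℕ).Nonempty := ⟨_, rfl⟩
  have := Nat.sInf_mem hne
  simpa using this

lemma colOf_of_mem_rtl (hπ : π.Perm (List.range (n + 1))) (h0 : π.getLast? = some 0)
    {v : ℕ} {k : ℕ} (hv : v ∈ rtlMax (pfxl π k)) : colOf π v = k + 1 := by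
  have hv0 : v ∈ pfxl π 0 := pfxl_mono_le hπ h0 (Nat.zero_le k) (rtlMax_subset hv)
  rw [colOf_eq_exitK hπ h0 hv0]
  exact ((mem_rtl_iff_exitK hπ h0 hv0 k).mp hv).symm

lemma col_spec (hπ : π.Perm (List.range (n + 1))) (h0 : π.getLast? = some 0)
    {v : ℕ} (hv0 : v ∈ pfxl π 0) :
    1 ≤ colOf π v ∧ v ∈ rtlMax (pfxl π (colOf π v - 1)) := by
  obtain ⟨h1, _⟩ := exitK_spec hπ h0 hv0
  rw [colOf_eq_exitK hπ h0 hv0]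
  refine ⟨h1, ?_⟩
  rw [mem_rtl_iff_exitK hπ h0 hv0]
  omega

end SST
namespace SST
open List

lemma indexOf_eq (l : List ℕ) (v : ℕ) (j : ℕ) (hj : j < l.length)
    (hget : l[j] = v) (hne : ∀ j', (h : j' < l.length) → j' < j → l[j'] ≠ v) :
    l.idxOf v = j := by
  induction l generalizing j with
  | nil => simp at hj
  | cons x xs ih =>
    cases j with
    | zero =>
      simp at hget
      subst hget
      simp [List.idxOf_cons_self]
    | succ j =>
      have hx : x ≠ v := by
        have := hne 0 (by simp) (by omega)
        simpa using this
      rw [List.idxOf_cons_ne _ hx]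
      have hj' : j < xs.length := by simpa using hj
      have hget' : xs[j] = v := by simpa using hget
      rw [ih j hj' hget' ?_]
      intro j' h' hlt
      have := hne (j'+1) (by simpa using h') (by omega)
      simpa using this

lemma prw_indexOf {l : List ℕ} (hp : l.Pairwise (· > ·)) {v w : ℕ}
    (hv : v ∈ l) (hw : w ∈ l) (hvw : w < v) : l.idxOf v < l.idxOf w := by
  have hvl : l.idxOf v < l.length := List.idxOf_lt_length_iff.mpr hv
  have hwl : l.idxOf w < l.length := List.idxOf_lt_length_iff.mpr hw
  have hgv : l[l.idxOf v] = v := List.getElem_idxOf hvl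
  have hgw : l[l.idxOf w] = w := List.getElem_idxOf hwl
  rw [List.pairwise_iff_getElem] at hp
  rcases lt_trichotomy (l.idxOf v) (l.idxOf w) with h | h | h
  · exact h
  · have h2 : l[l.idxOf v]? = some v := by rw [List.getElem?_eq_getElem hvl, hgv]
    have h3 : l[l.idxOf w]? = some w := by rw [List.getElem?_eq_getElem hwl, hgw]
    rw [h, h3] at h2
    have : v = w := by injection h2.symm
    omega
  · have := hp _ _ hwl hvl h
    rw [hgv, hgw] at this
    omega

lemma nodup_flatten_disj {B : List (List ℕ)} (h : B.flatten.Nodup) {j1 j2 : ℕ}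
    (hj1 : j1 < B.length) (hj2 : j2 < B.length) (hlt : j1 < j2) {v : ℕ}
    (h1 : v ∈ B[j1]) (h2 : v ∈ B[j2]) : False := by
  have hsplit : B = B.take (j1+1) ++ B.drop (j1+1) := (List.take_append_drop _ _).symm
  have hjoin : B.flatten = (B.take (j1+1)).flatten ++ (B.drop (j1+1)).flatten := by
    conv_lhs => rw [hsplit]
    rw [List.flatten_append]
  rw [hjoin] at h
  have hdisj := List.disjoint_of_nodup_append h
  have hmem1 : v ∈ (B.take (j1+1)).flatten := by
    refine List.mem_flatten.mpr ⟨B[j1], ?_, h1⟩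
    have hlen : j1 < (B.take (j1+1)).length := by
      rw [List.length_take]; omega
    have : (B.take (j1+1))[j1]'(by rw [List.length_take]; omega) = B[j1] := List.getElem_take
    exact this ▸ List.getElem_mem hlen
  have hmem2 : v ∈ (B.drop (j1+1)).flatten := by
    refine List.mem_flatten.mpr ⟨B[j2], ?_, h2⟩
    have hlen : j2 - (j1+1) < (B.drop (j1+1)).length := by
      rw [List.length_drop]; omega
    have : (B.drop (j1+1))[j2 - (j1+1)] = B[j2] := by
      rw [List.getElem_drop]
      congr 1
      omega
    exact this ▸ List.getElem_mem hlen
  exact hdisj hmem1 hmem2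

lemma flatten_split {B : List (List ℕ)} {j : ℕ} (hj : j < B.length) :
    B.flatten = (B.take j).flatten ++ B[j] ++ (B.drop (j+1)).flatten := by
  have h1 : B = B.take j ++ B[j] :: B.drop (j+1) := by
    conv_lhs => rw [← List.take_append_drop j B]
    rw [List.drop_eq_getElem_cons hj]
  conv_lhs => rw [h1]
  rw [List.flatten_append, List.flatten_cons, List.append_assoc]

variable {n : ℕ} {π : List ℕ}

/-- Structure of an rtl-maximum of the next prefix. -/
lemma jstruct (hπ : π.Perm (List.range (n + 1))) (h0 : π.getLast? = some 0)
    {k : ℕ} {v : ℕ} (hv : v ∈ rtlMax (pfxl π (k+1))) :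
    ∃ j, ∃ (hj : j < (blocksOf (pfxl π k)).length),
      v ∈ (blocksOf (pfxl π k))[j] ∧
      ((blocksOf (pfxl π k))[j]).foldr max 0 = v ∧
      (∀ x ∈ (((blocksOf (pfxl π k)).map ss).drop (j+1)).flatten, x < v) := by
  set B := blocksOf (pfxl π k) with hB
  have hJeq : pfxl π (k+1) = (B.map ss).flatten := pfxl_succ hπ h0 k
  have hJnd : (pfxl π (k+1)).Nodup := pfxl_nodup hπ (k+1)
  obtain ⟨A0, D0, hsplit0, hD0⟩ := rtlMax_split hv
  have hvJ : v ∈ (B.map ss).flatten := hJeq ▸ rtlMax_subset hv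
  obtain ⟨L, hL, hvL⟩ := List.mem_flatten.mp hvJ
  obtain ⟨b, hb, rfl⟩ := List.mem_map.mp hL
  obtain ⟨j, hj, rfl⟩ := List.getElem_of_mem hb
  have hjm : j < (B.map ss).length := by simpa using hj
  have hgetm : (B.map ss)[j] = ss B[j] := List.getElem_map _
  have hvb : v ∈ B[j] := mem_ss.mp hvL
  have hbne : B[j] ≠ [] := List.ne_nil_of_mem hvb
  obtain ⟨t, hts⟩ := ss_last B[j] hbne
  set m := (B[j]).foldr max 0 with hm
  have hsplitJ : (B.map ss).flatten =
      ((B.map ss).take j).flatten ++ ss B[j] ++ (((B.map ss)).drop (j+1)).flatten := by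
    have := flatten_split hjm
    rw [hgetm] at this
    exact this
  by_cases hvm : v = m
  · refine ⟨j, hj, hvb, hvm.symm, ?_⟩
    have hJ2 : pfxl π (k+1) = (((B.map ss).take j).flatten ++ t) ++ v ::
        (((B.map ss)).drop (j+1)).flatten := by
      rw [hJeq, hsplitJ, hts, ← hvm]
      simp [List.append_assoc]
    obtain ⟨-, hD⟩ := split_unique hJnd hsplit0 hJ2
    intro x hx
    exact hD0 x (hD ▸ hx)
  · exfalso
    have hvt : v ∈ t := by
      rw [hts] at hvL
      rcases mem_append.mp hvL with h | h
      · exact h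
      · simp at h; exact absurd h hvm
    obtain ⟨t1, t2, rfl⟩ := List.append_of_mem hvt
    have hJ2 : pfxl π (k+1) = (((B.map ss).take j).flatten ++ t1) ++ v ::
        (t2 ++ m :: (((B.map ss)).drop (j+1)).flatten) := by
      rw [hJeq, hsplitJ, hts]
      simp [List.append_assoc]
    obtain ⟨-, hD⟩ := split_unique hJnd hsplit0 hJ2
    have hmD : m ∈ D0 := by
      rw [hD]; exact mem_append_right _ (mem_cons_self)
    have := hD0 m hmD
    have : v ≤ m := le_fmax hvb
    omega

end SST
namespace SST
open List

variable {n : ℕ} {π : List ℕ}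

lemma pfxl_zero (hπ : π.Perm (List.range (n + 1))) (h0 : π.getLast? = some 0) :
    pfxl π 0 = π.dropLast := by
  have hne : π ≠ [] := by intro h; rw [h] at h0; simp at h0
  have hlast : π.getLast hne = 0 := by
    have := List.getLast?_eq_getLast hne
    rw [this] at h0
    exact Option.some_injective _ h0.symm |>.symm
  have hsplit : π.dropLast ++ [0] = π := by
    rw [← hlast]; exact List.dropLast_append_getLast hne
  have hnd : π.Nodup := (hπ.nodup_iff).mpr (List.nodup_range)
  have h0d : (0:ℕ) ∉ π.dropLast := by
    intro h
    have := hsplit ▸ hnd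
    rw [List.nodup_append] at this
    exact this.2.2 _ h _ (by simp) rfl
  rw [pfxl_def]
  show π.takeWhile _ = _
  conv_lhs => rw [← hsplit]
  refine takeWhile_middle _ _ _ _ ?_ (by simp)
  intro x hx
  simp only [decide_eq_true_eq]
  intro hx0; exact h0d (hx0 ▸ hx)

lemma mem_pfxl_zero (hπ : π.Perm (List.range (n + 1))) (h0 : π.getLast? = some 0)
    {v : ℕ} (h1 : 1 ≤ v) (hn : v ≤ n) : v ∈ pfxl π 0 := by
  have hvπ : v ∈ π := hπ.mem_iff.mpr (List.mem_range.mpr (by omega))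
  have hne : π ≠ [] := by intro h; rw [h] at h0; simp at h0
  have hlast : π.getLast hne = 0 := by
    have := List.getLast?_eq_getLast hne
    rw [this] at h0
    exact Option.some_injective _ h0.symm |>.symm
  have hsplit : π.dropLast ++ [0] = π := by
    rw [← hlast]; exact List.dropLast_append_getLast hne
  rw [pfxl_zero hπ h0]
  have : v ∈ π.dropLast ++ [0] := hsplit.symm ▸ hvπ
  rcases mem_append.mp this with h | h
  · exact h
  · simp at h; omega

lemma colpos_of_get (hπ : π.Perm (List.range (n + 1))) (h0 : π.getLast? = some 0)
    {k j : ℕ} (hj : j < (rtlMax (pfxl π k)).length) :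
    colposOf π ((rtlMax (pfxl π k))[j]) = j + 1 := by
  have hmem : (rtlMax (pfxl π k))[j] ∈ rtlMax (pfxl π k) := List.getElem_mem hj
  have hcol : colOf π ((rtlMax (pfxl π k))[j]) = k + 1 := colOf_of_mem_rtl hπ h0 hmem
  unfold colposOf
  rw [hcol, colSeqAt_eq]
  have hidx : (rtlMax (pfxl π k)).idxOf ((rtlMax (pfxl π k))[j]) = j := by
    apply indexOf_eq _ _ j hj rfl
    intro j' h' hlt hEq
    have hp := (List.pairwise_iff_getElem.mp (rtlMax_pairwise (pfxl π k))) j' j h' hj hlt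
    rw [hEq] at hp
    omega
  rw [hidx]

/-- One step of the `leftOf` map. -/
lemma step_left (hπ : π.Perm (List.range (n + 1))) (h0 : π.getLast? = some 0)
    {k v : ℕ} (hv : v ∈ rtlMax (pfxl π (k+1))) :
    ∃ j, ∃ (hjB : j < (blocksOf (pfxl π k)).length)
      (hjC : j < (rtlMax (pfxl π k)).length),
      v ∈ (blocksOf (pfxl π k))[j] ∧
      ((blocksOf (pfxl π k))[j]).foldr max 0 = v ∧
      leftOf π v = (rtlMax (pfxl π k))[j] ∧
      v < (rtlMax (pfxl π k))[j] ∧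
      rowOf π ((rtlMax (pfxl π k))[j]) = rowOf π v ∧
      (∀ x ∈ (((blocksOf (pfxl π k)).map ss).drop (j+1)).flatten, x < v) := by
  obtain ⟨j, hjB, hvb, hfmax, hdom⟩ := jstruct hπ h0 hv
  have hlenBC : (blocksOf (pfxl π k)).length = (rtlMax (pfxl π k)).length :=
    length_blocksOf _
  have hjC : j < (rtlMax (pfxl π k)).length := hlenBC ▸ hjB
  have hvne0 : v ≠ 0 := mem_pfxl_ne_zero (rtlMax_subset hv)
  have hBnd : ((blocksOf (pfxl π k)).flatten).Nodup := by
    have := ((perm0 (pfxl π k)).nodup_iff).mpr (pfxl_nodup hπ k)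
    exact (List.nodup_append.mp this).2.1
  have hcol : colOf π v = k + 2 := colOf_of_mem_rtl hπ h0 hv
  -- the indexOf computation
  have hidx : (((blocksOf (pfxl π k)).map (fun b => b.foldr max 0)).idxOf v) = j := by
    apply indexOf_eq _ _ j (by simpa using hjB)
    · rw [List.getElem_map]
      exact hfmax
    · intro j' h' hlt hEq
      rw [List.getElem_map] at hEq
      have hj'B : j' < (blocksOf (pfxl π k)).length := by simpa using h'
      by_cases hb' : (blocksOf (pfxl π k))[j'] = []
      · rw [hb'] at hEq
        exact hvne0 hEq.symm
      · have : v ∈ (blocksOf (pfxl π k))[j'] := hEq ▸ fmax_mem hb'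
        exact nodup_flatten_disj hBnd hj'B hjB hlt this hvb
  have hleft : leftOf π v = (rtlMax (pfxl π k))[j] := by
    unfold leftOf
    rw [hcol]
    show (colSeqAt π (k+1)).getD
      (((blocksAt π (k+1)).map (fun b => b.foldr max 0)).idxOf v) 0 = _
    rw [colSeqAt_eq, blocksAt_eq, hidx]
    exact List.getD_eq_getElem _ _ hjC
  have hlt : v < (rtlMax (pfxl π k))[j] := by
    have := blk_lt (pfxl π k) (pfxl_nodup hπ k) j v
      (by rw [List.getD_eq_getElem _ _ hjB]; exact hvb)
    rw [List.getD_eq_getElem _ _ hjC] at this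
    exact this
  have hcmem : (rtlMax (pfxl π k))[j] ∈ rtlMax (pfxl π k) := List.getElem_mem hjC
  have hccol : colOf π ((rtlMax (pfxl π k))[j]) = k + 1 := colOf_of_mem_rtl hπ h0 hcmem
  have hrow : rowOf π ((rtlMax (pfxl π k))[j]) = rowOf π v := by
    unfold rowOf
    rw [hcol, hccol]
    show colposOf π ((leftOf π)^[k] _) = colposOf π ((leftOf π)^[k+1] v)
    rw [Function.iterate_succ_apply, hleft]
  exact ⟨j, hjB, hjC, hvb, hfmax, hleft, hlt, hrow, hdom⟩

lemma row_mono (hπ : π.Perm (List.range (n + 1))) (h0 : π.getLast? = some 0) :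
    ∀ k v w, v ∈ rtlMax (pfxl π k) → w ∈ rtlMax (pfxl π k) → w < v →
      rowOf π v < rowOf π w := by
  intro k
  induction k with
  | zero =>
    intro v w hv hw hvw
    have hcv : colOf π v = 1 := colOf_of_mem_rtl hπ h0 hv
    have hcw : colOf π w = 1 := colOf_of_mem_rtl hπ h0 hw
    have hrv : rowOf π v = (rtlMax (pfxl π 0)).idxOf v + 1 := by
      unfold rowOf
      rw [hcv]
      show colposOf π ((leftOf π)^[0] v) = _
      rw [Function.iterate_zero_apply]
      unfold colposOf
      rw [hcv, colSeqAt_eq]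
    have hrw : rowOf π w = (rtlMax (pfxl π 0)).idxOf w + 1 := by
      unfold rowOf
      rw [hcw]
      show colposOf π ((leftOf π)^[0] w) = _
      rw [Function.iterate_zero_apply]
      unfold colposOf
      rw [hcw, colSeqAt_eq]
    rw [hrv, hrw]
    have := prw_indexOf (rtlMax_pairwise (pfxl π 0)) hv hw hvw
    omega
  | succ k ih =>
    intro v w hv hw hvw
    obtain ⟨jv, hjvB, hjvC, hvb, hvfmax, hvleft, hvlt, hvrow, hvdom⟩ := step_left hπ h0 hv
    obtain ⟨jw, hjwB, hjwC, hwb, hwfmax, hwleft, hwlt, hwrow, hwdom⟩ := step_left hπ h0 hw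
    have hjlt : jv < jw := by
      rcases lt_trichotomy jv jw with h | h | h
      · exact h
      · exfalso
        subst h
        rw [hvfmax] at hwfmax
        omega
      · exfalso
        -- v is in a later block, so v < w by w's domination property
        have hmem : v ∈ (((blocksOf (pfxl π k)).map ss).drop (jw+1)).flatten := by
          refine List.mem_flatten.mpr ⟨ss ((blocksOf (pfxl π k))[jv]), ?_, mem_ss.mpr hvb⟩
          have hlt2 : jv - (jw+1) < (((blocksOf (pfxl π k)).map ss).drop (jw+1)).length := by
            rw [List.length_drop, List.length_map]; omega
          have hge : ((((blocksOf (pfxl π k)).map ss).drop (jw+1)))[jv - (jw+1)] =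
              ((blocksOf (pfxl π k)).map ss)[jv]'(by simpa using hjvB) := by
            rw [List.getElem_drop]
            congr 1
            omega
          have hm2 : ((blocksOf (pfxl π k)).map ss)[jv]'(by simpa using hjvB) =
              ss ((blocksOf (pfxl π k))[jv]) := List.getElem_map _
          rw [hm2] at hge
          exact hge ▸ List.getElem_mem hlt2
        have := hwdom v hmem
        omega
    have hclt : (rtlMax (pfxl π k))[jw] < (rtlMax (pfxl π k))[jv] :=
      (List.pairwise_iff_getElem.mp (rtlMax_pairwise (pfxl π k))) jv jw hjvC hjwC hjlt
    have := ih _ _ (List.getElem_mem hjvC) (List.getElem_mem hjwC) hclt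
    rw [hvrow, hwrow] at this
    exact this

lemma chain (hπ : π.Perm (List.range (n + 1))) (h0 : π.getLast? = some 0) :
    ∀ d k v, v ∈ rtlMax (pfxl π (k+d)) →
      ((leftOf π)^[d] v) ∈ rtlMax (pfxl π k) ∧ v ≤ (leftOf π)^[d] v ∧
      rowOf π ((leftOf π)^[d] v) = rowOf π v := by
  intro d
  induction d with
  | zero =>
    intro k v hv
    exact ⟨hv, le_rfl, rfl⟩
  | succ d ih =>
    intro k v hv
    have hv' : v ∈ rtlMax (pfxl π ((k+d)+1)) := by
      rw [show (k+d)+1 = k+(d+1) by omega]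
      exact hv
    obtain ⟨j, hjB, hjC, hvb, hfmax, hleft, hlt, hrow, hdom⟩ := step_left hπ h0 hv'
    have hc : leftOf π v ∈ rtlMax (pfxl π (k+d)) := by
      rw [hleft]; exact List.getElem_mem hjC
    obtain ⟨h1, h2, h3⟩ := ih k (leftOf π v) hc
    rw [Function.iterate_succ_apply]
    refine ⟨h1, ?_, ?_⟩
    · exact le_trans hlt.le (hleft ▸ h2)
    · rw [h3, hleft, hrow]

end SST

/-- Theorem 3.16: if `T_π(i) ≥_D T_π(j)` then `i ≥ j`. -/
theorem stmt_11 (n : ℕ) (π : List ℕ) (hπ : π.Perm (List.range (n + 1)))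
    (h0 : π.getLast? = some 0) (i j : ℕ) (hi1 : 1 ≤ i) (hin : i ≤ n)
    (hj1 : 1 ≤ j) (hjn : j ≤ n)
    (h : colOf π i ≤ colOf π j ∧ rowOf π i ≤ rowOf π j) :
    j ≤ i := by
  obtain ⟨hcol, hrow⟩ := h
  have hi0 : i ∈ SST.pfxl π 0 := SST.mem_pfxl_zero hπ h0 hi1 hin
  have hj0 : j ∈ SST.pfxl π 0 := SST.mem_pfxl_zero hπ h0 hj1 hjn
  obtain ⟨hci1, hirtl⟩ := SST.col_spec hπ h0 hi0
  obtain ⟨hcj1, hjrtl⟩ := SST.col_spec hπ h0 hj0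
  set d := colOf π j - colOf π i with hd
  have hkk : colOf π j - 1 = (colOf π i - 1) + d := by omega
  rw [hkk] at hjrtl
  obtain ⟨hw1, hw2, hw3⟩ := SST.chain hπ h0 d (colOf π i - 1) j hjrtl
  rcases lt_trichotomy ((leftOf π)^[d] j) i with hlt | heq | hgt
  · omega
  · omega
  · exfalso
    have hm := SST.row_mono hπ h0 (colOf π i - 1) ((leftOf π)^[d] j) i hw1 hirtl hgt
    rw [hw3] at hm
    omega
end

section
/- For all π ∈ S_n', the stack-sorting tableau T_π : {1,...,n} → D(α_π) is a bijection. -/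
section MyAux
open List

theorem my_foldr_max_ge {l : List ℕ} {x : ℕ} (h : x ∈ l) : x ≤ l.foldr max 0 := by
  induction l with
  | nil => simp at h
  | cons a t ih =>
    rcases List.mem_cons.mp h with rfl | h
    · exact le_max_left _ _
    · exact le_trans (ih h) (le_max_right _ _)

theorem my_foldr_max_le {l : List ℕ} {m : ℕ} (h : ∀ x ∈ l, x ≤ m) : l.foldr max 0 ≤ m := by
  induction l with
  | nil => simp
  | cons a t ih =>
    simp only [List.foldr_cons, max_le_iff]
    exact ⟨h a (List.mem_cons_self), ih fun x hx => h x (List.mem_cons_of_mem _ hx)⟩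

theorem my_foldr_max_eq {l : List ℕ} {m : ℕ} (hm : m ∈ l) (h : ∀ x ∈ l, x ≤ m) :
    l.foldr max 0 = m :=
  le_antisymm (my_foldr_max_le h) (my_foldr_max_ge hm)

theorem my_takeWhile_split (T D : List ℕ) (m : ℕ) (hT : ∀ y ∈ T, y ≠ m) :
    (T ++ m :: D).takeWhile (fun y => y ≠ m) = T ∧
    (T ++ m :: D).dropWhile (fun y => y ≠ m) = m :: D := by
  induction T with
  | nil => simp
  | cons a t ih =>
    have ha : a ≠ m := hT a (List.mem_cons_self)
    have := ih (fun y hy => hT y (List.mem_cons_of_mem _ hy))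
    constructor
    · rw [List.cons_append, List.takeWhile_cons_of_pos (by simp [ha]), this.1]
    · rw [List.cons_append, List.dropWhile_cons_of_pos (by simp [ha]), this.2]

theorem ss_eq_cons (x : ℕ) (xs : List ℕ) :
    ss (x :: xs) =
      ss ((x :: xs).takeWhile (fun y => y ≠ (x :: xs).foldr max 0)) ++
      ss (((x :: xs).dropWhile (fun y => y ≠ (x :: xs).foldr max 0)).drop 1) ++
      [(x :: xs).foldr max 0] := by
  rw [ss]

theorem ss_split (T D : List ℕ) (m : ℕ) (hT : ∀ y ∈ T, y < m) (hD : ∀ y ∈ D, y < m) :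
    ss (T ++ m :: D) = ss T ++ ss D ++ [m] := by
  have hmem : m ∈ T ++ m :: D := by simp
  have hle : ∀ x ∈ T ++ m :: D, x ≤ m := by
    intro x hx
    rcases List.mem_append.mp hx with h | h
    · exact le_of_lt (hT x h)
    · rcases List.mem_cons.mp h with rfl | h
      · exact le_refl _
      · exact le_of_lt (hD x h)
  have hmax : (T ++ m :: D).foldr max 0 = m := my_foldr_max_eq hmem hle
  have hsplit := my_takeWhile_split T D m (fun y hy => Nat.ne_of_lt (hT y hy))
  obtain ⟨x, xs, hx⟩ : ∃ x xs, T ++ m :: D = x :: xs := by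
    cases h : T ++ m :: D with
    | nil => exact absurd h (by simp)
    | cons a b => exact ⟨a, b, rfl⟩
  rw [hx] at hmax hsplit ⊢
  rw [ss_eq_cons, hmax, hsplit.1, hsplit.2]
  simp

theorem dropWhile_head_false {p : ℕ → Bool} {l : List ℕ} {a : ℕ} {as : List ℕ}
    (h : l.dropWhile p = a :: as) : p a = false := by
  induction l with
  | nil => simp at h
  | cons x xs ih =>
    rw [List.dropWhile_cons] at h
    by_cases hx : p x
    · rw [if_pos hx] at h; exact ih h
    · rw [if_neg hx] at h
      cases h
      simpa using hx

theorem ss_perm (l : List ℕ) : (ss l).Perm l := by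
  suffices H : ∀ n (l : List ℕ), l.length = n → (ss l).Perm l from H l.length l rfl
  intro n
  induction n using Nat.strong_induction_on with
  | _ n ih =>
  intro l hn
  subst hn
  cases l with
  | nil => rw [ss]
  | cons x xs =>
    have hmem : (x :: xs).foldr max 0 ∈ x :: xs := foldrMaxMem x xs
    have hdw : (x :: xs).dropWhile (fun y => y ≠ (x :: xs).foldr max 0) ≠ [] := by
      intro h
      rw [List.dropWhile_eq_nil_iff] at h
      simpa using h _ hmem
    obtain ⟨a, as, ha⟩ : ∃ a as,
        (x :: xs).dropWhile (fun y => y ≠ (x :: xs).foldr max 0) = a :: as := by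
      cases h : (x :: xs).dropWhile (fun y => y ≠ (x :: xs).foldr max 0) with
      | nil => exact absurd h hdw
      | cons a b => exact ⟨a, b, rfl⟩
    have ham : a = (x :: xs).foldr max 0 := by
      have := dropWhile_head_false ha
      exact Classical.not_not.mp (of_decide_eq_false this)
    subst ham
    have hdecomp : x :: xs = (x :: xs).takeWhile (fun y => y ≠ (x :: xs).foldr max 0) ++
        (x :: xs).foldr max 0 :: as := by
      conv_lhs => rw [← List.takeWhile_append_dropWhile
        (p := fun y => decide (y ≠ (x :: xs).foldr max 0)) (l := x :: xs)]
      rw [ha]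
    have hT := takeWhileLt (x :: xs) ((x :: xs).foldr max 0) hmem
    have hD := dropWhileDropLt (x :: xs) ((x :: xs).foldr max 0) (by simp)
    have h1 := ih _ hT ((x :: xs).takeWhile (fun y => y ≠ (x :: xs).foldr max 0)) rfl
    have h2 := ih _ hD (((x :: xs).dropWhile (fun y => y ≠ (x :: xs).foldr max 0)).drop 1) rfl
    rw [ha] at h2
    simp only [List.drop_succ_cons, List.drop_zero] at h2
    calc ss (x :: xs)
        = ss ((x :: xs).takeWhile (fun y => y ≠ (x :: xs).foldr max 0)) ++ ss as ++
            [(x :: xs).foldr max 0] := by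
          rw [ss_eq_cons, ha]; rfl
      _ ~ (x :: xs).takeWhile (fun y => y ≠ (x :: xs).foldr max 0) ++ as ++
            [(x :: xs).foldr max 0] := (h1.append h2).append (List.Perm.refl _)
      _ ~ (x :: xs).takeWhile (fun y => y ≠ (x :: xs).foldr max 0) ++
            ((x :: xs).foldr max 0 :: as) := by
          rw [List.append_assoc]
          refine List.Perm.append_left _ ?_
          simpa using List.perm_append_comm (l₁ := as) (l₂ := [(x :: xs).foldr max 0])
      _ = x :: xs := hdecomp.symm

theorem rtlMax_cons (x : ℕ) (xs : List ℕ) :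
    rtlMax (x :: xs) = if ∀ y ∈ xs, y < x then x :: rtlMax xs else rtlMax xs := by
  rw [rtlMax]

theorem blocksOf_cons (x : ℕ) (xs : List ℕ) :
    blocksOf (x :: xs) = if ∀ y ∈ xs, y < x then [] :: blocksOf xs else
      match blocksOf xs with
      | [] => [[x]]
      | b :: bs => (x :: b) :: bs := by
  rw [blocksOf]

theorem rtlMax_sublist (l : List ℕ) : (rtlMax l).Sublist l := by
  induction l with
  | nil => simp [rtlMax]
  | cons x xs ih =>
    rw [rtlMax_cons]
    by_cases h : ∀ y ∈ xs, y < x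
    · rw [if_pos h]; exact ih.cons₂ x
    · rw [if_neg h]; exact ih.cons x

theorem blocksOf_ne_nil {l : List ℕ} (h : l ≠ []) : blocksOf l ≠ [] := by
  cases l with
  | nil => exact absurd rfl h
  | cons x xs =>
    rw [blocksOf_cons]
    by_cases hc : ∀ y ∈ xs, y < x
    · rw [if_pos hc]; simp
    · rw [if_neg hc]
      cases blocksOf xs <;> simp

theorem length_blocksOf (l : List ℕ) : (blocksOf l).length = (rtlMax l).length := by
  induction l with
  | nil => simp [rtlMax, blocksOf]
  | cons x xs ih =>
    rw [rtlMax_cons, blocksOf_cons]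
    by_cases h : ∀ y ∈ xs, y < x
    · rw [if_pos h, if_pos h]; simp [ih]
    · rw [if_neg h, if_neg h]
      have hxs : xs ≠ [] := by
        rintro rfl
        exact h (by simp)
      have := blocksOf_ne_nil hxs
      cases hb : blocksOf xs with
      | nil => exact absurd hb this
      | cons b bs => rw [hb] at ih; simpa using ih

/-- Interleaving blocks and column entries. -/
def glue : List (List ℕ) → List ℕ → List ℕ
  | b :: bs, c :: cs => b ++ c :: glue bs cs
  | _, _ => []

theorem glue_blocksOf_rtlMax (l : List ℕ) : glue (blocksOf l) (rtlMax l) = l := by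
  induction l with
  | nil => simp [rtlMax, blocksOf, glue]
  | cons x xs ih =>
    rw [rtlMax_cons, blocksOf_cons]
    by_cases h : ∀ y ∈ xs, y < x
    · rw [if_pos h, if_pos h, glue]
      simp [ih]
    · rw [if_neg h, if_neg h]
      have hxs : xs ≠ [] := by rintro rfl; exact h (by simp)
      have h2 := blocksOf_ne_nil hxs
      have h3 : rtlMax xs ≠ [] := by
        intro hr
        have := length_blocksOf xs
        rw [hr] at this
        simp only [List.length_nil] at this
        exact h2 (List.length_eq_zero_iff.mp this)
      cases hb : blocksOf xs with
      | nil => exact absurd hb h2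
      | cons b bs =>
        cases hr : rtlMax xs with
        | nil => exact absurd hr h3
        | cons c cs =>
          rw [hb, hr] at ih
          rw [glue] at ih ⊢
          simp [ih]

theorem glue_perm (bs : List (List ℕ)) (cs : List ℕ) (h : bs.length = cs.length) :
    (glue bs cs).Perm (bs.flatten ++ cs) := by
  induction bs generalizing cs with
  | nil =>
    cases cs with
    | nil => simp [glue]
    | cons c cs => simp at h
  | cons b bs ih =>
    cases cs with
    | nil => simp at h
    | cons c cs =>
      rw [glue]
      simp only [List.length_cons, Nat.add_right_cancel_iff] at h
      calc (b ++ c :: glue bs cs).Perm (b ++ c :: (bs.flatten ++ cs)) :=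
            List.Perm.append_left _ ((ih cs h).cons c)
        _ ~ (b :: bs).flatten ++ c :: cs := by
            simp only [List.flatten_cons, List.append_assoc]
            refine List.Perm.append_left _ ?_
            calc (c :: (bs.flatten ++ cs)).Perm (bs.flatten ++ c :: cs) :=
                  (List.perm_middle).symm
              _ ~ bs.flatten ++ c :: cs := List.Perm.refl _

theorem mem_rtlMax_iff {l : List ℕ} {v : ℕ} :
    v ∈ rtlMax l ↔ ∃ t d, l = t ++ v :: d ∧ ∀ y ∈ d, y < v := by
  constructor
  · intro hv
    induction l with
    | nil => simp [rtlMax] at hv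
    | cons x xs ih =>
      rw [rtlMax_cons] at hv
      by_cases h : ∀ y ∈ xs, y < x
      · rw [if_pos h] at hv
        rcases List.mem_cons.mp hv with rfl | hv
        · exact ⟨[], xs, rfl, h⟩
        · obtain ⟨t, d, rfl, hd⟩ := ih hv
          exact ⟨x :: t, d, rfl, hd⟩
      · rw [if_neg h] at hv
        obtain ⟨t, d, rfl, hd⟩ := ih hv
        exact ⟨x :: t, d, rfl, hd⟩
  · rintro ⟨t, d, rfl, hd⟩
    induction t with
    | nil =>
      rw [List.nil_append, rtlMax_cons, if_pos hd]
      exact List.mem_cons_self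
    | cons a t ih =>
      rw [List.cons_append, rtlMax_cons]
      by_cases h : ∀ y ∈ t ++ v :: d, y < a
      · rw [if_pos h]; exact List.mem_cons_of_mem _ ih
      · rw [if_neg h]; exact ih

theorem rtlMax_append_of_small {t r : List ℕ} (h : ∀ x ∈ t, ∃ y ∈ r, x ≤ y) :
    rtlMax (t ++ r) = rtlMax r := by
  induction t with
  | nil => simp
  | cons a t ih =>
    rw [List.cons_append, rtlMax_cons]
    have : ¬ ∀ y ∈ t ++ r, y < a := by
      intro hall
      obtain ⟨y, hy, hay⟩ := h a (List.mem_cons_self)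
      exact absurd (hall y (List.mem_append_right _ hy)) (not_lt.mpr hay)
    rw [if_neg this]
    exact ih fun x hx => h x (List.mem_cons_of_mem _ hx)

theorem blocksOf_split (T D : List ℕ) (m : ℕ) (hT : ∀ y ∈ T, y < m) (hD : ∀ y ∈ D, y < m) :
    blocksOf (T ++ m :: D) = T :: blocksOf D ∧ rtlMax (T ++ m :: D) = m :: rtlMax D := by
  induction T with
  | nil =>
    rw [List.nil_append, blocksOf_cons, rtlMax_cons, if_pos hD, if_pos hD]
    exact ⟨rfl, rfl⟩
  | cons a T ih =>
    have ha : a < m := hT a (List.mem_cons_self)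
    obtain ⟨ihb, ihr⟩ := ih (fun y hy => hT y (List.mem_cons_of_mem _ hy))
    have hcond : ¬ ∀ y ∈ T ++ m :: D, y < a := by
      intro hall
      exact absurd (hall m (by simp)) (not_lt.mpr (le_of_lt ha))
    constructor
    · rw [List.cons_append, blocksOf_cons, if_neg hcond, ihb]
    · rw [List.cons_append, rtlMax_cons, if_neg hcond, ihr]

theorem ss_nil : ss [] = [] := by rw [ss]

theorem my_sorted_append {l₁ l₂ : List ℕ} :
    (l₁ ++ l₂).Pairwise (· < ·) ↔ l₁.Pairwise (· < ·) ∧ l₂.Pairwise (· < ·) ∧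
      ∀ x ∈ l₁, ∀ y ∈ l₂, x < y :=
  List.pairwise_append

theorem key_lemma : ∀ (N : ℕ) (B A : List ℕ), (B ++ A).length = N →
    (B ++ A).Nodup → 0 ∉ B → 0 ∉ A → A.Pairwise (· < ·) →
    ∃ M : List ℕ, M.Pairwise (· < ·) ∧ M.Perm (A ++ rtlMax B) ∧ 0 ∉ M ∧
      ss (B ++ 0 :: A) = ((blocksOf B).map ss).flatten ++ 0 :: M := by
  intro N
  induction N using Nat.strong_induction_on with
  | _ N ih =>
  intro B A hN hnd h0B h0A hA
  rcases Nat.eq_zero_or_pos N with rfl | hNpos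
  · -- B = [] and A = []
    have hBA : B ++ A = [] := List.length_eq_zero_iff.mp hN
    have hB : B = [] := List.append_eq_nil_iff.mp hBA |>.1
    have hA' : A = [] := List.append_eq_nil_iff.mp hBA |>.2
    subst hB; subst hA'
    refine ⟨[], by simp, by simp [rtlMax], by simp, ?_⟩
    have := ss_split [] [] 0 (by simp) (by simp)
    simpa [ss_nil, rtlMax, blocksOf] using this
  · -- B ++ A nonempty
    have hne : B ++ A ≠ [] := by
      intro h; rw [h] at hN; simp at hN; omega
    set m := (B ++ A).foldr max 0 with hm
    have hmem : m ∈ B ++ A := by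
      cases h : B ++ A with
      | nil => exact absurd h hne
      | cons x xs => rw [hm, h]; exact foldrMaxMem x xs
    have hle : ∀ x ∈ B ++ A, x ≤ m := fun x hx => my_foldr_max_ge hx
    have hm1 : 1 ≤ m := by
      obtain ⟨x, hx⟩ : ∃ x, x ∈ B ++ A := by
        cases h : B ++ A with
        | nil => exact absurd h hne
        | cons a b => exact ⟨a, List.mem_cons_self⟩
      have hx0 : x ≠ 0 := by
        rcases List.mem_append.mp hx with h | h
        · exact fun he => h0B (he ▸ h)
        · exact fun he => h0A (he ▸ h)
      have := hle x hx
      omega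
    rcases List.mem_append.mp hmem with hmB | hmA
    · -- m ∈ B
      obtain ⟨T, B₂, hB⟩ := List.append_of_mem hmB
      have hndB : B.Nodup := (List.nodup_append.mp hnd).1
      have hndB' := hndB; rw [hB, List.nodup_append] at hndB'
      have hmT : m ∉ T := fun h => hndB'.2.2 m h m List.mem_cons_self rfl
      have hmB₂ : m ∉ B₂ := by
        have := hndB'.2.1
        simpa using (List.nodup_cons.mp this).1
      have hmA : m ∉ A := by
        have hdisj := (List.nodup_append.mp hnd).2.2
        exact fun h => hdisj m hmB m h rfl
    -- strict bounds
      have hTlt : ∀ y ∈ T, y < m := by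
        intro y hy
        have hyB : y ∈ B := by rw [hB]; exact List.mem_append_left _ hy
        have := hle y (List.mem_append_left _ hyB)
        rcases lt_or_eq_of_le this with h | rfl
        · exact h
        · exact absurd hy hmT
      have hB₂lt : ∀ y ∈ B₂, y < m := by
        intro y hy
        have hyB : y ∈ B := by rw [hB]; exact List.mem_append_right _ (List.mem_cons_of_mem _ hy)
        have := hle y (List.mem_append_left _ hyB)
        rcases lt_or_eq_of_le this with h | rfl
        · exact h
        · exact absurd hy hmB₂
      have hAlt : ∀ y ∈ A, y < m := by
        intro y hy
        have := hle y (List.mem_append_right _ hy)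
        rcases lt_or_eq_of_le this with h | rfl
        · exact h
        · exact absurd hy hmA
      have hDlt : ∀ y ∈ B₂ ++ 0 :: A, y < m := by
        intro y hy
        rcases List.mem_append.mp hy with h | h
        · exact hB₂lt y h
        · rcases List.mem_cons.mp h with rfl | h
          · omega
          · exact hAlt y h
      -- apply ss_split
      have hsplit : ss (B ++ 0 :: A) = ss T ++ ss (B₂ ++ 0 :: A) ++ [m] := by
        rw [hB]
        have : T ++ m :: B₂ ++ 0 :: A = T ++ m :: (B₂ ++ 0 :: A) := by simp
        rw [this, ss_split T (B₂ ++ 0 :: A) m hTlt hDlt]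
      -- IH
      have hlen : (B₂ ++ A).length < N := by
        rw [← hN, hB]; simp; omega
      have hnd₂ : (B₂ ++ A).Nodup := by
        have : (B ++ A).Nodup := hnd
        rw [hB] at this
        have h2 : (T ++ (m :: B₂ ++ A)).Nodup := by simpa using this
        have h3 := (List.nodup_append.mp h2).2.1
        exact (List.nodup_cons.mp (by simpa using h3)).2
      have h0B₂ : 0 ∉ B₂ := fun h => h0B (by rw [hB]; exact List.mem_append_right _ (List.mem_cons_of_mem _ h))
      obtain ⟨M₂, hM₂s, hM₂p, hM₂0, hM₂eq⟩ := ih _ hlen B₂ A rfl hnd₂ h0B₂ h0A hA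
      obtain ⟨hbl, hrtl⟩ := blocksOf_split T B₂ m hTlt hB₂lt
      refine ⟨M₂ ++ [m], ?_, ?_, ?_, ?_⟩
      · rw [my_sorted_append]
        refine ⟨hM₂s, by simp, ?_⟩
        intro x hx y hy
        rcases List.mem_singleton.mp hy with rfl
        have hx' := hM₂p.mem_iff.mp hx
        rcases List.mem_append.mp hx' with h | h
        · exact hAlt x h
        · exact hB₂lt x ((rtlMax_sublist B₂).mem h)
      · rw [hB, hrtl]
        calc (M₂ ++ [m]).Perm ((A ++ rtlMax B₂) ++ [m]) := hM₂p.append_right _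
          _ ~ A ++ (rtlMax B₂ ++ [m]) := by rw [List.append_assoc]
          _ ~ A ++ (m :: rtlMax B₂) := by
              refine List.Perm.append_left _ ?_
              simpa using List.perm_append_comm (l₁ := rtlMax B₂) (l₂ := [m])
      · intro h
        rcases List.mem_append.mp h with h | h
        · exact hM₂0 h
        · simp at h; omega
      · rw [hsplit, hM₂eq, hB, hbl]
        simp
    · -- m ∈ A : A = A' ++ [m]
      obtain ⟨A', D, hA'⟩ := List.append_of_mem hmA
      have hD : D = [] := by
        by_contra hD
        obtain ⟨y, hy⟩ : ∃ y, y ∈ D := by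
          cases h : D with
          | nil => exact absurd h hD
          | cons a b => exact ⟨a, List.mem_cons_self⟩
        have hsA : A.Pairwise (· < ·) := hA
        rw [hA'] at hsA
        have : m < y := (List.pairwise_cons.mp (my_sorted_append.mp hsA).2.1).1 y hy
        have : y ≤ m := hle y (List.mem_append_right _ (by rw [hA']; simp [hy]))
        omega
      subst hD
      have hBA : B ++ 0 :: A = (B ++ 0 :: A') ++ m :: [] := by rw [hA']; simp
      have hTlt : ∀ y ∈ B ++ 0 :: A', y < m := by
        intro y hy
        rcases List.mem_append.mp hy with h | h
        · have := hle y (List.mem_append_left _ h)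
          rcases lt_or_eq_of_le this with h' | rfl
          · exact h'
          · -- y = m ∈ B but m ∈ A and nodup
            have hdisj := (List.nodup_append.mp hnd).2.2
            exact absurd rfl (hdisj m h m hmA)
        · rcases List.mem_cons.mp h with rfl | h
          · omega
          · have hyA : y ∈ A := by rw [hA']; exact List.mem_append_left _ h
            have := hle y (List.mem_append_right _ hyA)
            rcases lt_or_eq_of_le this with h' | rfl
            · exact h'
            · -- y = m ∈ A', but A nodup
              have hndA : A.Nodup := (List.nodup_append.mp hnd).2.1
              rw [hA', List.nodup_append] at hndA
              exact absurd rfl (hndA.2.2 m h m (List.mem_singleton_self m))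
      have hsplit : ss (B ++ 0 :: A) = ss (B ++ 0 :: A') ++ ss [] ++ [m] := by
        rw [hBA, ss_split _ [] m hTlt (by simp)]
      have hlen : (B ++ A').length < N := by rw [← hN, hA']; simp
      have hnd' : (B ++ A').Nodup := by
        have : (B ++ A).Nodup := hnd
        rw [hA', ← List.append_assoc] at this
        exact (List.nodup_append.mp this).1
      have h0A' : 0 ∉ A' := fun h => h0A (by rw [hA']; exact List.mem_append_left _ h)
      have hA's : A'.Pairwise (· < ·) := by
        have : A.Pairwise (· < ·) := hA
        rw [hA'] at this
        exact (my_sorted_append.mp this).1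
      obtain ⟨M', hM's, hM'p, hM'0, hM'eq⟩ := ih _ hlen B A' rfl hnd' h0B h0A' hA's
      refine ⟨M' ++ [m], ?_, ?_, ?_, ?_⟩
      · rw [my_sorted_append]
        refine ⟨hM's, by simp, ?_⟩
        intro x hx y hy
        rcases List.mem_singleton.mp hy with rfl
        have hx' := hM'p.mem_iff.mp hx
        rcases List.mem_append.mp hx' with h | h
        · exact hTlt x (List.mem_append_right _ (List.mem_cons_of_mem _ h))
        · exact hTlt x (List.mem_append_left _ ((rtlMax_sublist B).mem h))
      · rw [hA']
        calc (M' ++ [m]).Perm ((A' ++ rtlMax B) ++ [m]) := hM'p.append_right _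
          _ ~ (A' ++ [m]) ++ rtlMax B := by
              calc ((A' ++ rtlMax B) ++ [m]).Perm (A' ++ (rtlMax B ++ [m])) := by
                    rw [List.append_assoc]
                _ ~ A' ++ ([m] ++ rtlMax B) :=
                    List.Perm.append_left _ List.perm_append_comm
                _ = (A' ++ [m]) ++ rtlMax B := by rw [List.append_assoc]
      · intro h
        rcases List.mem_append.mp h with h | h
        · exact hM'0 h
        · simp at h; omega
      · rw [hsplit, hM'eq, ss_nil]
        simp

theorem my_indexOf_eq {L : List ℕ} {v : ℕ} {j : ℕ} (hj : j < L.length)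
    (hv : L.get ⟨j, hj⟩ = v) (huniq : ∀ k (hk : k < L.length), L.get ⟨k, hk⟩ = v → k = j) :
    L.idxOf v = j := by
  have hmem : v ∈ L := hv ▸ List.get_mem L ⟨j, hj⟩
  have h1 : L.idxOf v < L.length := List.idxOf_lt_length_iff.mpr hmem
  have h2 : L.get ⟨L.idxOf v, h1⟩ = v := List.getElem_idxOf h1
  exact huniq _ h1 h2

theorem flat_rtl (bs : List (List ℕ))
    (h : ∀ b ∈ bs, ∀ x ∈ b, ∀ u, b.getLast? = some u → x ≤ u) :
    rtlMax bs.flatten = rtlMax (bs.filterMap List.getLast?) := by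
  induction bs with
  | nil => simp
  | cons b rest ih =>
    have hrest : ∀ b' ∈ rest, ∀ x ∈ b', ∀ u, b'.getLast? = some u → x ≤ u :=
      fun b' hb' => h b' (List.mem_cons_of_mem _ hb')
    rcases eq_or_ne b [] with rfl | hb
    · simpa [List.filterMap_cons] using ih hrest
    · have hu : b.getLast? = some (b.getLast hb) := List.getLast?_eq_getLast hb
      have hdec : b = b.dropLast ++ [b.getLast hb] := (List.dropLast_append_getLast hb).symm
      have hble : ∀ x ∈ b, x ≤ b.getLast hb := fun x hx => h b (List.mem_cons_self) x hx _ hu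
      rw [List.flatten_cons, List.filterMap_cons, hu]
      calc rtlMax (b ++ rest.flatten)
          = rtlMax (b.dropLast ++ (b.getLast hb :: rest.flatten)) := by
            conv_lhs => rw [hdec]
            rw [List.append_assoc]
            rfl
        _ = rtlMax (b.getLast hb :: rest.flatten) := by
            refine rtlMax_append_of_small ?_
            intro x hx
            exact ⟨b.getLast hb, List.mem_cons_self,
              hble x (List.mem_of_mem_dropLast hx)⟩
        _ = rtlMax (b.getLast hb :: rest.filterMap List.getLast?) := by
            rw [rtlMax_cons, rtlMax_cons]
            have hiff : (∀ y ∈ rest.flatten, y < b.getLast hb) ↔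
                (∀ y ∈ rest.filterMap List.getLast?, y < b.getLast hb) := by
              constructor
              · intro hall y hy
                obtain ⟨b', hb', hy'⟩ := List.mem_filterMap.mp hy
                have hb'ne : b' ≠ [] := by
                  intro hE; rw [hE] at hy'; simp at hy'
                have : y ∈ b' := by
                  have := List.getLast?_eq_getLast hb'ne
                  rw [this] at hy'
                  cases hy'
                  exact List.getLast_mem _
                exact hall y (List.mem_flatten.mpr ⟨b', hb', this⟩)
              · intro hall y hy
                obtain ⟨b', hb', hy'⟩ := List.mem_flatten.mp hy
                have hb'ne : b' ≠ [] := List.ne_nil_of_mem hy'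
                have hle := hrest b' hb' y hy' _ (List.getLast?_eq_getLast hb'ne)
                have hlt := hall _ (List.mem_filterMap.mpr
                  ⟨b', hb', List.getLast?_eq_getLast hb'ne⟩)
                omega
            by_cases hc : ∀ y ∈ rest.flatten, y < b.getLast hb
            · rw [if_pos hc, if_pos (hiff.mp hc), ih hrest]
            · rw [if_neg hc, if_neg (fun hc2 => hc (hiff.mpr hc2)), ih hrest]

theorem ss_getLast {b : List ℕ} (hb : b ≠ []) : (ss b).getLast? = some (b.foldr max 0) := by
  cases b with
  | nil => exact absurd rfl hb
  | cons x xs =>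
    rw [ss_eq_cons]
    exact List.getLast?_concat

theorem ss_le_max {b : List ℕ} {x : ℕ} (hx : x ∈ ss b) : x ≤ b.foldr max 0 :=
  my_foldr_max_ge ((ss_perm b).mem_iff.mp hx)

theorem iter_ss_perm (l : List ℕ) (k : ℕ) : (ss^[k] l).Perm l := by
  induction k with
  | zero => simp
  | succ k ih =>
    rw [Function.iterate_succ_apply']
    exact (ss_perm _).trans ih

theorem blocks_decomp_perm (l : List ℕ) : l.Perm ((blocksOf l).flatten ++ rtlMax l) := by
  conv_lhs => rw [← glue_blocksOf_rtlMax l]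
  exact glue_perm _ _ (length_blocksOf l)

theorem flatten_map_ss_perm (bs : List (List ℕ)) : ((bs.map ss).flatten).Perm bs.flatten := by
  induction bs with
  | nil => simp
  | cons b rest ih =>
    simp only [List.map_cons, List.flatten_cons]
    exact (ss_perm b).append ih

theorem key_step {B A : List ℕ} (hnd : (B ++ 0 :: A).Nodup) (hA : A.Pairwise (· < ·)) :
    ∃ M, M.Pairwise (· < ·) ∧
      ss (B ++ 0 :: A) = ((blocksOf B).map ss).flatten ++ 0 :: M ∧
      (ss (B ++ 0 :: A)).takeWhile (fun y => y ≠ 0) = ((blocksOf B).map ss).flatten := by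
  have hperm : (B ++ 0 :: A).Perm (0 :: (B ++ A)) := List.perm_middle
  have hnd' : (0 :: (B ++ A)).Nodup := hperm.nodup hnd
  have h0BA : 0 ∉ B ++ A := (List.nodup_cons.mp hnd').1
  have hndBA : (B ++ A).Nodup := (List.nodup_cons.mp hnd').2
  have h0B : 0 ∉ B := fun h => h0BA (List.mem_append_left _ h)
  have h0A : 0 ∉ A := fun h => h0BA (List.mem_append_right _ h)
  obtain ⟨M, hMs, hMp, hM0, hMeq⟩ := key_lemma _ B A rfl hndBA h0B h0A hA
  have hflat0 : ∀ y ∈ ((blocksOf B).map ss).flatten, y ≠ 0 := by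
    intro y hy
    obtain ⟨b', hb', hyb'⟩ := List.mem_flatten.mp hy
    obtain ⟨b, hb, rfl⟩ := List.mem_map.mp hb'
    have hyb : y ∈ b := (ss_perm b).mem_iff.mp hyb'
    have : y ∈ B := (blocks_decomp_perm B).mem_iff.mpr
      (List.mem_append_left _ (List.mem_flatten.mpr ⟨b, hb, hyb⟩))
    exact fun h => h0B (h ▸ this)
  refine ⟨M, hMs, hMeq, ?_⟩
  rw [hMeq]
  exact (my_takeWhile_split _ M 0 hflat0).1

theorem prefix_decomp {n : ℕ} {π : List ℕ} (hπ : π.Perm (List.range (n + 1)))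
    (h0 : π.getLast? = some 0) :
    ∀ i, 1 ≤ i → ∃ A, ss^[i-1] π = prefixAt π i ++ 0 :: A ∧ A.Pairwise (· < ·) := by
  have hndπ : π.Nodup := hπ.nodup_iff.mpr (List.nodup_range)
  intro i hi
  induction i with
  | zero => omega
  | succ i ih =>
    rcases Nat.eq_zero_or_pos i with rfl | hi1
    · -- base case i+1 = 1
      have hdecomp : π.dropLast ++ [0] = π := List.dropLast_append_getLast? 0 h0
      have h0d : ∀ y ∈ π.dropLast, y ≠ 0 := by
        intro y hy
        have hnd' : (π.dropLast ++ [0]).Nodup := by rw [hdecomp]; exact hndπ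
        rw [List.nodup_append] at hnd'
        intro h
        exact hnd'.2.2 y hy 0 (List.mem_singleton_self 0) h
      refine ⟨[], ?_, by simp⟩
      have : prefixAt π 1 = π.dropLast := by
        have h1 : prefixAt π 1 = π.takeWhile (fun x => x ≠ 0) := rfl
        rw [h1]
        conv_lhs => rw [← hdecomp]
        exact (my_takeWhile_split _ [] 0 h0d).1
      rw [this]
      exact hdecomp.symm
    · obtain ⟨A, hEq, hAs⟩ := ih hi1
      have hndσ : (ss^[i-1] π).Nodup := (iter_ss_perm π _).nodup_iff.mpr hndπ
      have hnd : (prefixAt π i ++ 0 :: A).Nodup := hEq ▸ hndσ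
      obtain ⟨M, hMs, hMeq, hMtake⟩ := key_step hnd hAs
      have hσ : ss^[i+1-1] π = ss (ss^[i-1] π) := by
        have : i + 1 - 1 = (i - 1) + 1 := by omega
        rw [this, Function.iterate_succ_apply']
      have hpre : prefixAt π (i+1) = ((blocksOf (prefixAt π i)).map ss).flatten := by
        conv_lhs => unfold prefixAt
        rw [hσ, hEq, hMtake]
      refine ⟨M, ?_, hMs⟩
      rw [hσ, hEq, hMeq, hpre]

theorem prefix_succ {n : ℕ} {π : List ℕ} (hπ : π.Perm (List.range (n + 1)))
    (h0 : π.getLast? = some 0) (i : ℕ) (hi : 1 ≤ i) :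
    prefixAt π (i+1) = ((blocksAt π i).map ss).flatten := by
  have hndπ : π.Nodup := hπ.nodup_iff.mpr (List.nodup_range)
  obtain ⟨A, hEq, hAs⟩ := prefix_decomp hπ h0 i hi
  have hndσ : (ss^[i-1] π).Nodup := (iter_ss_perm π _).nodup_iff.mpr hndπ
  have hnd : (prefixAt π i ++ 0 :: A).Nodup := hEq ▸ hndσ
  obtain ⟨M, hMs, hMeq, hMtake⟩ := key_step hnd hAs
  have hσ : ss^[i+1-1] π = ss (ss^[i-1] π) := by
    have : i + 1 - 1 = (i - 1) + 1 := by omega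
    rw [this, Function.iterate_succ_apply']
  unfold blocksAt
  conv_lhs => unfold prefixAt
  rw [hσ, hEq, hMtake]

theorem prefix_nodup {n : ℕ} {π : List ℕ} (hπ : π.Perm (List.range (n + 1))) (i : ℕ) :
    (prefixAt π i).Nodup := by
  have hndσ : (ss^[i-1] π).Nodup :=
    (iter_ss_perm π _).nodup_iff.mpr (hπ.nodup_iff.mpr (List.nodup_range))
  exact (List.takeWhile_sublist _).nodup hndσ

theorem prefix_pos {π : List ℕ} {i v : ℕ} (hv : v ∈ prefixAt π i) : v ≠ 0 := by
  have := List.mem_takeWhile_imp hv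
  simpa using this

theorem prefix_perm_step {n : ℕ} {π : List ℕ} (hπ : π.Perm (List.range (n + 1)))
    (h0 : π.getLast? = some 0) (i : ℕ) (hi : 1 ≤ i) :
    (prefixAt π i).Perm (prefixAt π (i+1) ++ colSeqAt π i) := by
  rw [prefix_succ hπ h0 i hi]
  refine (blocks_decomp_perm (prefixAt π i)).trans ?_
  exact List.Perm.append ((flatten_map_ss_perm _).symm) (List.Perm.refl _)

theorem colSeqAt_def (π : List ℕ) (i : ℕ) : colSeqAt π i = rtlMax (prefixAt π i) := rfl
theorem blocksAt_def (π : List ℕ) (i : ℕ) : blocksAt π i = blocksOf (prefixAt π i) := rfl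

theorem colSeq_subset_prefix {π : List ℕ} {i v : ℕ} (hv : v ∈ colSeqAt π i) :
    v ∈ prefixAt π i := (rtlMax_sublist _).mem hv

theorem mem_prefix_succ_iff {n : ℕ} {π : List ℕ} (hπ : π.Perm (List.range (n + 1)))
    (h0 : π.getLast? = some 0) {i : ℕ} (hi : 1 ≤ i) (v : ℕ) :
    v ∈ prefixAt π (i+1) ↔ v ∈ prefixAt π i ∧ v ∉ colSeqAt π i := by
  have hperm := prefix_perm_step hπ h0 i hi
  have hnd : (prefixAt π (i+1) ++ colSeqAt π i).Nodup := hperm.nodup (prefix_nodup hπ i)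
  rw [List.nodup_append] at hnd
  constructor
  · intro hv
    exact ⟨hperm.mem_iff.mpr (List.mem_append_left _ hv), fun hc => hnd.2.2 v hv v hc rfl⟩
  · rintro ⟨hv, hc⟩
    rcases List.mem_append.mp (hperm.mem_iff.mp hv) with h | h
    · exact h
    · exact absurd h hc

theorem prefix_one {n : ℕ} {π : List ℕ} (hπ : π.Perm (List.range (n + 1)))
    (h0 : π.getLast? = some 0) : prefixAt π 1 = π.dropLast := by
  have hndπ : π.Nodup := hπ.nodup_iff.mpr (List.nodup_range)
  have hdecomp : π.dropLast ++ [0] = π := List.dropLast_append_getLast? 0 h0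
  have h0d : ∀ y ∈ π.dropLast, y ≠ 0 := by
    intro y hy
    have hnd' : (π.dropLast ++ [0]).Nodup := by rw [hdecomp]; exact hndπ
    rw [List.nodup_append] at hnd'
    intro h
    exact hnd'.2.2 y hy 0 (List.mem_singleton_self 0) h
  have h1 : prefixAt π 1 = π.takeWhile (fun x => x ≠ 0) := rfl
  rw [h1]
  conv_lhs => rw [← hdecomp]
  exact (my_takeWhile_split _ [] 0 h0d).1

theorem mem_prefix_one {n : ℕ} {π : List ℕ} (hπ : π.Perm (List.range (n + 1)))
    (h0 : π.getLast? = some 0) (v : ℕ) :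
    v ∈ prefixAt π 1 ↔ 1 ≤ v ∧ v ≤ n := by
  have hndπ : π.Nodup := hπ.nodup_iff.mpr (List.nodup_range)
  have hdecomp : π.dropLast ++ [0] = π := List.dropLast_append_getLast? 0 h0
  rw [prefix_one hπ h0]
  constructor
  · intro hv
    have hvπ : v ∈ π := by rw [← hdecomp]; exact List.mem_append_left _ hv
    have : v < n + 1 := List.mem_range.mp (hπ.mem_iff.mp hvπ)
    have hv0 : v ≠ 0 := by
      intro h
      have hnd' : (π.dropLast ++ [0]).Nodup := by rw [hdecomp]; exact hndπ
      rw [List.nodup_append] at hnd'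
      exact hnd'.2.2 v hv 0 (List.mem_singleton_self 0) h
    omega
  · rintro ⟨h1, h2⟩
    have hvπ : v ∈ π := hπ.mem_iff.mpr (List.mem_range.mpr (by omega))
    rw [← hdecomp] at hvπ
    rcases List.mem_append.mp hvπ with h | h
    · exact h
    · simp at h; omega

theorem prefix_length_le {n : ℕ} {π : List ℕ} (hπ : π.Perm (List.range (n + 1)))
    (h0 : π.getLast? = some 0) : ∀ i, 1 ≤ i → (prefixAt π i).length ≤ n + 1 - i := by
  intro i hi
  induction i with
  | zero => omega
  | succ i ih =>
    rcases Nat.eq_zero_or_pos i with rfl | hi1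
    · rw [prefix_one hπ h0]
      have : π.length = n + 1 := by rw [hπ.length_eq, List.length_range]
      simp [this]
    · have hlen := ih hi1
      rcases eq_or_ne (prefixAt π i) [] with he | hne
      · have : prefixAt π (i+1) = [] := by
          rw [prefix_succ hπ h0 i hi1, blocksAt_def, he]
          rfl
        simp [this]
      · have hC : colSeqAt π i ≠ [] := by
          rw [colSeqAt_def]
          intro hr
          have h1 := length_blocksOf (prefixAt π i)
          rw [hr] at h1
          simp only [List.length_nil] at h1
          exact (blocksOf_ne_nil hne) (List.length_eq_zero_iff.mp h1)
        have hperm := prefix_perm_step hπ h0 i hi1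
        have := hperm.length_eq
        rw [List.length_append] at this
        have hCpos : 0 < (colSeqAt π i).length := List.length_pos_iff.mpr hC
        omega

theorem prefix_mono {n : ℕ} {π : List ℕ} (hπ : π.Perm (List.range (n + 1)))
    (h0 : π.getLast? = some 0) {j i v : ℕ} (hj : 1 ≤ j) (hji : j ≤ i)
    (hv : v ∈ prefixAt π i) : v ∈ prefixAt π j := by
  induction i with
  | zero => omega
  | succ i ih =>
    rcases Nat.lt_or_ge j (i+1) with h | h
    · have hi1 : 1 ≤ i := by omega
      exact ih (by omega) (((mem_prefix_succ_iff hπ h0 hi1 v).mp hv).1)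
    · have : j = i + 1 := by omega
      exact this ▸ hv

theorem col_exists {n : ℕ} {π : List ℕ} (hπ : π.Perm (List.range (n + 1)))
    (h0 : π.getLast? = some 0) :
    ∀ fuel i v, 1 ≤ i → n + 1 - i ≤ fuel → v ∈ prefixAt π i →
      ∃ j, i ≤ j ∧ 1 ≤ j ∧ v ∈ colSeqAt π j := by
  intro fuel
  induction fuel with
  | zero =>
    intro i v hi hf hv
    have := prefix_length_le hπ h0 i hi
    have h0' : (prefixAt π i).length = 0 := by omega
    rw [List.length_eq_zero_iff.mp h0'] at hv
    simp at hv
  | succ fuel ih =>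
    intro i v hi hf hv
    by_cases hc : v ∈ colSeqAt π i
    · exact ⟨i, le_refl _, hi, hc⟩
    · have hv' : v ∈ prefixAt π (i+1) := (mem_prefix_succ_iff hπ h0 hi v).mpr ⟨hv, hc⟩
      obtain ⟨j, hij, hj1, hjc⟩ := ih (i+1) v (by omega) (by omega) hv'
      exact ⟨j, by omega, hj1, hjc⟩

theorem col_unique {n : ℕ} {π : List ℕ} (hπ : π.Perm (List.range (n + 1)))
    (h0 : π.getLast? = some 0) {i j v : ℕ} (hi : 1 ≤ i) (hj : 1 ≤ j)
    (hvi : v ∈ colSeqAt π i) (hvj : v ∈ colSeqAt π j) : i = j := by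
  by_contra hne
  wlog hij : i < j generalizing i j
  · exact this hj hi hvj hvi (fun h => hne h.symm) (by omega)
  have hvpj : v ∈ prefixAt π j := colSeq_subset_prefix hvj
  have : v ∈ prefixAt π (i+1) := prefix_mono hπ h0 (by omega) (by omega) hvpj
  exact ((mem_prefix_succ_iff hπ h0 hi v).mp this).2 hvi

theorem colOf_eq {n : ℕ} {π : List ℕ} (hπ : π.Perm (List.range (n + 1)))
    (h0 : π.getLast? = some 0) {i v : ℕ} (hi : 1 ≤ i) (hv : v ∈ colSeqAt π i) :
    colOf π v = i := by
  have hset : {j | 1 ≤ j ∧ v ∈ colSeqAt π j} = {i} := by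
    ext j
    simp only [Set.mem_setOf_eq, Set.mem_singleton_iff]
    constructor
    · rintro ⟨hj, hvj⟩
      exact (col_unique hπ h0 hj hi hvj hv).symm ▸ rfl
    · rintro rfl
      exact ⟨hi, hv⟩
  unfold colOf
  rw [hset]
  exact csInf_singleton i

theorem colSeq_succ_eq {n : ℕ} {π : List ℕ} (hπ : π.Perm (List.range (n + 1)))
    (h0 : π.getLast? = some 0) (i : ℕ) (hi : 1 ≤ i) :
    colSeqAt π (i+1) = rtlMax (((blocksAt π i).map ss).filterMap List.getLast?) := by
  rw [colSeqAt_def, prefix_succ hπ h0 i hi]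
  refine flat_rtl _ ?_
  intro b' hb' x hx u hu
  obtain ⟨b, hb, rfl⟩ := List.mem_map.mp hb'
  have hbne : b ≠ [] := by
    rintro rfl
    rw [ss_nil] at hx
    simp at hx
  rw [ss_getLast hbne] at hu
  cases hu
  exact ss_le_max hx

theorem block_of_colSeq_succ {n : ℕ} {π : List ℕ} (hπ : π.Perm (List.range (n + 1)))
    (h0 : π.getLast? = some 0) {i v : ℕ} (hi : 1 ≤ i) (hv : v ∈ colSeqAt π (i+1)) :
    ∃ (j : ℕ) (hj : j < (blocksAt π i).length),
      (blocksAt π i).get ⟨j, hj⟩ ≠ [] ∧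
      v = ((blocksAt π i).get ⟨j, hj⟩).foldr max 0 ∧
      ((blocksAt π i).map (fun b => b.foldr max 0)).idxOf v = j := by
  have hv0 : v ≠ 0 := prefix_pos (colSeq_subset_prefix hv)
  have hvm : v ∈ ((blocksAt π i).map ss).filterMap List.getLast? := by
    rw [colSeq_succ_eq hπ h0 i hi] at hv
    exact (rtlMax_sublist _).mem hv
  obtain ⟨b', hb', hlast⟩ := List.mem_filterMap.mp hvm
  obtain ⟨b, hb, rfl⟩ := List.mem_map.mp hb'
  have hbne : b ≠ [] := by
    rintro rfl
    rw [ss_nil] at hlast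
    simp at hlast
  have hvb : v = b.foldr max 0 := by
    rw [ss_getLast hbne] at hlast
    cases hlast
    rfl
  obtain ⟨⟨j, hj⟩, hget⟩ := List.mem_iff_get.mp hb
  -- nodup of the flatten of blocks
  have hndB : (prefixAt π i).Nodup := prefix_nodup hπ i
  have hndF : ((blocksAt π i).flatten).Nodup := by
    have := (blocks_decomp_perm (prefixAt π i)).nodup hndB
    rw [List.nodup_append] at this
    exact this.1
  have hflat := List.nodup_flatten.mp hndF
  -- v belongs to block j
  have hvmem : ∀ (k : ℕ) (hk : k < (blocksAt π i).length),
      ((blocksAt π i).get ⟨k, hk⟩).foldr max 0 = v → v ∈ (blocksAt π i).get ⟨k, hk⟩ := by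
    intro k hk hfold
    cases hbk : (blocksAt π i).get ⟨k, hk⟩ with
    | nil => rw [hbk] at hfold; simp at hfold; exact absurd hfold.symm hv0
    | cons x xs =>
      rw [hbk] at hfold
      rw [← hfold]
      exact foldrMaxMem x xs
  have huniq : ∀ (k : ℕ) (hk : k < (blocksAt π i).length),
      ((blocksAt π i).get ⟨k, hk⟩).foldr max 0 = v → k = j := by
    intro k hk hfold
    by_contra hne
    have hv1 : v ∈ (blocksAt π i).get ⟨k, hk⟩ := hvmem k hk hfold
    have hv2 : v ∈ (blocksAt π i).get ⟨j, hj⟩ :=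
      hvmem j hj (by rw [hget]; exact hvb.symm)
    have hpw := List.pairwise_iff_get.mp hflat.2
    rcases Nat.lt_or_ge k j with h | h
    · exact (hpw ⟨k, hk⟩ ⟨j, hj⟩ h) hv1 hv2
    · have : j < k := by omega
      exact (hpw ⟨j, hj⟩ ⟨k, hk⟩ this) hv2 hv1
  refine ⟨j, hj, ?_, ?_, ?_⟩
  · rw [hget]; exact hbne
  · rw [hget]; exact hvb
  · refine my_indexOf_eq (L := (blocksAt π i).map (fun b => b.foldr max 0))
      (by simpa using hj) ?_ ?_
    · rw [List.get_eq_getElem, List.getElem_map]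
      have hget' : (blocksAt π i)[j] = b := hget
      simp only [Fin.val_mk, hget']
      exact hvb.symm
    · intro k hk hkv
      rw [List.get_eq_getElem, List.getElem_map] at hkv
      have hk' : k < (blocksAt π i).length := by simpa using hk
      exact huniq k hk' hkv

theorem colSeq_length_eq_blocks {π : List ℕ} (i : ℕ) :
    (colSeqAt π i).length = (blocksAt π i).length := by
  rw [colSeqAt_def, blocksAt_def, length_blocksOf]

theorem leftOf_spec {n : ℕ} {π : List ℕ} (hπ : π.Perm (List.range (n + 1)))
    (h0 : π.getLast? = some 0) {i v : ℕ} (hi : 1 ≤ i) (hv : v ∈ colSeqAt π (i+1)) :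
    ∃ (j : ℕ) (hj : j < (colSeqAt π i).length),
      leftOf π v = (colSeqAt π i).get ⟨j, hj⟩ ∧
      ∀ w, w ∈ colSeqAt π (i+1) → leftOf π w = leftOf π v → w = v := by
  obtain ⟨j, hjb, hbne, hvb, hidx⟩ := block_of_colSeq_succ hπ h0 hi hv
  have hcol : colOf π v = i + 1 := colOf_eq hπ h0 (by omega) hv
  have hj : j < (colSeqAt π i).length := by rw [colSeq_length_eq_blocks]; exact hjb
  have hleft : leftOf π v = (colSeqAt π i).get ⟨j, hj⟩ := by
    unfold leftOf
    rw [hcol]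
    simp only [Nat.add_sub_cancel]
    rw [hidx, List.getD_eq_getElem _ _ hj, List.get_eq_getElem]
  refine ⟨j, hj, hleft, ?_⟩
  intro w hw hlw
  obtain ⟨k, hkb, hbnek, hwb, hidxk⟩ := block_of_colSeq_succ hπ h0 hi hw
  have hcolw : colOf π w = i + 1 := colOf_eq hπ h0 (by omega) hw
  have hk : k < (colSeqAt π i).length := by rw [colSeq_length_eq_blocks]; exact hkb
  have hleftw : leftOf π w = (colSeqAt π i).get ⟨k, hk⟩ := by
    unfold leftOf
    rw [hcolw]
    simp only [Nat.add_sub_cancel]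
    rw [hidxk, List.getD_eq_getElem _ _ hk, List.get_eq_getElem]
  have hndC : (colSeqAt π i).Nodup := (rtlMax_sublist _).nodup (prefix_nodup hπ i)
  have hkj : k = j := by
    have : (colSeqAt π i).get ⟨k, hk⟩ = (colSeqAt π i).get ⟨j, hj⟩ := by
      rw [← hleftw, ← hleft, hlw]
    have h2 := hndC.get_inj_iff.mp this
    exact congrArg Fin.val h2
  subst hkj
  rw [hwb, hvb]

theorem leftOf_mem {n : ℕ} {π : List ℕ} (hπ : π.Perm (List.range (n + 1)))
    (h0 : π.getLast? = some 0) {i v : ℕ} (hi : 1 ≤ i) (hv : v ∈ colSeqAt π (i+1)) :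
    leftOf π v ∈ colSeqAt π i := by
  obtain ⟨j, hj, hleft, _⟩ := leftOf_spec hπ h0 hi hv
  rw [hleft]
  exact List.get_mem _ _

theorem rowOf_succ {n : ℕ} {π : List ℕ} (hπ : π.Perm (List.range (n + 1)))
    (h0 : π.getLast? = some 0) {i v : ℕ} (hi : 1 ≤ i) (hv : v ∈ colSeqAt π (i+1)) :
    rowOf π v = rowOf π (leftOf π v) := by
  have hcol : colOf π v = i + 1 := colOf_eq hπ h0 (by omega) hv
  have hcoll : colOf π (leftOf π v) = i := colOf_eq hπ h0 hi (leftOf_mem hπ h0 hi hv)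
  unfold rowOf
  rw [hcol, hcoll]
  have h2 : i + 1 - 1 = (i - 1) + 1 := by omega
  rw [h2, Function.iterate_succ_apply]

theorem rowOf_one {n : ℕ} {π : List ℕ} (hπ : π.Perm (List.range (n + 1)))
    (h0 : π.getLast? = some 0) {v : ℕ} (hv : v ∈ colSeqAt π 1) :
    rowOf π v = (colSeqAt π 1).idxOf v + 1 := by
  have hcol : colOf π v = 1 := colOf_eq hπ h0 (le_refl _) hv
  unfold rowOf colposOf
  rw [hcol]
  simp only [Nat.sub_self, Function.iterate_zero, id_eq]
  rw [hcol]

noncomputable def rowsAt (π : List ℕ) (i : ℕ) : Finset ℕ :=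
  ((colSeqAt π i).map (rowOf π)).toFinset

theorem mem_rowsAt {π : List ℕ} {i r : ℕ} :
    r ∈ rowsAt π i ↔ ∃ v ∈ colSeqAt π i, rowOf π v = r := by
  unfold rowsAt
  rw [List.mem_toFinset, List.mem_map]

theorem rowOf_injOn {n : ℕ} {π : List ℕ} (hπ : π.Perm (List.range (n + 1)))
    (h0 : π.getLast? = some 0) :
    ∀ i, 1 ≤ i → ∀ v ∈ colSeqAt π i, ∀ w ∈ colSeqAt π i,
      rowOf π v = rowOf π w → v = w := by
  intro i
  induction i with
  | zero => omega
  | succ i ih =>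
    intro hi v hv w hw hrow
    rcases Nat.eq_zero_or_pos i with rfl | hi1
    · -- column 1
      rw [rowOf_one hπ h0 hv, rowOf_one hπ h0 hw] at hrow
      have hrow' : (colSeqAt π 1).idxOf v = (colSeqAt π 1).idxOf w := by omega
      have h1 : (colSeqAt π 1).idxOf v < (colSeqAt π 1).length :=
        List.idxOf_lt_length_iff.mpr hv
      have h2 := List.getElem_idxOf (x := v) (xs := colSeqAt π 1) h1
      have h3 := List.getElem_idxOf (x := w) (xs := colSeqAt π 1) (hrow' ▸ h1)
      rw [← h2, ← h3]
      congr 1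
    · -- column i+1 with i ≥ 1
      rw [rowOf_succ hπ h0 hi1 hv, rowOf_succ hπ h0 hi1 hw] at hrow
      have hlv := leftOf_mem hπ h0 hi1 hv
      have hlw := leftOf_mem hπ h0 hi1 hw
      have hleq : leftOf π v = leftOf π w := ih hi1 _ hlv _ hlw hrow
      obtain ⟨j, hj, hleft, huniq⟩ := leftOf_spec hπ h0 hi1 hv
      exact (huniq w hw (by rw [hleq])).symm ▸ rfl

theorem rows_mono {n : ℕ} {π : List ℕ} (hπ : π.Perm (List.range (n + 1)))
    (h0 : π.getLast? = some 0) {i : ℕ} (hi : 1 ≤ i) :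
    rowsAt π (i+1) ⊆ rowsAt π i := by
  intro r hr
  obtain ⟨v, hv, hrow⟩ := mem_rowsAt.mp hr
  refine mem_rowsAt.mpr ⟨leftOf π v, leftOf_mem hπ h0 hi hv, ?_⟩
  rw [← rowOf_succ hπ h0 hi hv, hrow]

theorem rows_le {n : ℕ} {π : List ℕ} (hπ : π.Perm (List.range (n + 1)))
    (h0 : π.getLast? = some 0) {j i : ℕ} (hj : 1 ≤ j) (hji : j ≤ i) :
    rowsAt π i ⊆ rowsAt π j := by
  induction i with
  | zero => intro r hr; omega
  | succ i ih =>
    rcases Nat.lt_or_ge j (i+1) with h | h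
    · exact fun r hr => ih (by omega) (rows_mono hπ h0 (by omega) hr)
    · have : j = i + 1 := by omega
      exact this ▸ fun r hr => hr

theorem rowsAt_one {n : ℕ} {π : List ℕ} (hπ : π.Perm (List.range (n + 1)))
    (h0 : π.getLast? = some 0) :
    rowsAt π 1 = Finset.Icc 1 (colSeqAt π 1).length := by
  have hndC : (colSeqAt π 1).Nodup := (rtlMax_sublist _).nodup (prefix_nodup hπ 1)
  ext r
  rw [mem_rowsAt, Finset.mem_Icc]
  constructor
  · rintro ⟨v, hv, rfl⟩
    rw [rowOf_one hπ h0 hv]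
    have := List.idxOf_lt_length_iff.mpr hv
    omega
  · rintro ⟨h1, h2⟩
    have hr1 : r - 1 < (colSeqAt π 1).length := by omega
    refine ⟨(colSeqAt π 1).get ⟨r-1, hr1⟩, List.get_mem _ _, ?_⟩
    rw [rowOf_one hπ h0 (List.get_mem _ _)]
    have hidx : (colSeqAt π 1).idxOf ((colSeqAt π 1).get ⟨r-1, hr1⟩) = r - 1 := by
      refine my_indexOf_eq hr1 rfl ?_
      intro k hk hkeq
      have := hndC.get_inj_iff.mp hkeq
      exact congrArg Fin.val this
    omega

theorem down_closed_eq (S : Finset ℕ) (h0 : 0 ∉ S)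
    (h1 : ∀ i, 1 ≤ i → i + 1 ∈ S → i ∈ S) : S = Finset.Icc 1 S.card := by
  rcases S.eq_empty_or_nonempty with rfl | hne
  · simp
  · have hmax := S.max'_mem hne
    have hS : S = Finset.Icc 1 (S.max' hne) := by
      ext k
      rw [Finset.mem_Icc]
      constructor
      · intro hk
        have hk0 : k ≠ 0 := fun h => h0 (h ▸ hk)
        exact ⟨by omega, S.le_max' k hk⟩
      · rintro ⟨hk1, hk2⟩
        have hdesc : ∀ d, d ≤ S.max' hne - k → S.max' hne - d ∈ S := by
          intro d
          induction d with
          | zero => intro _; simpa using hmax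
          | succ d ih =>
            intro hd
            have hmem : S.max' hne - d ∈ S := ih (by omega)
            have heq : S.max' hne - d = (S.max' hne - (d+1)) + 1 := by omega
            refine h1 _ (by omega) ?_
            rw [← heq]
            exact hmem
        have := hdesc (S.max' hne - k) (le_refl _)
        have heq : S.max' hne - (S.max' hne - k) = k := by omega
        rwa [heq] at this
    have hcard : S.card = S.max' hne := by
      conv_lhs => rw [hS]
      rw [Nat.card_Icc]
      omega
    rw [hcard, ← hS]

theorem col_package {n : ℕ} {π : List ℕ} (hπ : π.Perm (List.range (n + 1)))
    (h0 : π.getLast? = some 0) {v : ℕ} (hv1 : 1 ≤ v) (hv2 : v ≤ n) :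
    1 ≤ colOf π v ∧ colOf π v ≤ n ∧ v ∈ colSeqAt π (colOf π v) := by
  have hvp : v ∈ prefixAt π 1 := (mem_prefix_one hπ h0 v).mpr ⟨hv1, hv2⟩
  obtain ⟨c, _, hc1, hcv⟩ := col_exists hπ h0 n 1 v (le_refl _) (by omega) hvp
  have hcol : colOf π v = c := colOf_eq hπ h0 hc1 hcv
  have hcn : c ≤ n := by
    have hvpc : v ∈ prefixAt π c := colSeq_subset_prefix hcv
    have hlen := prefix_length_le hπ h0 c hc1
    have : 0 < (prefixAt π c).length := List.length_pos_iff.mpr (List.ne_nil_of_mem hvpc)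
    omega
  exact ⟨hcol ▸ hc1, hcol ▸ hcn, hcol ▸ hcv⟩

open Classical in
noncomputable def colSet (π : List ℕ) (n j : ℕ) : Finset ℕ :=
  (Finset.Icc 1 n).filter (fun i => j ∈ rowsAt π i)

open Classical in
theorem mem_colSet {π : List ℕ} {n j i : ℕ} :
    i ∈ colSet π n j ↔ (1 ≤ i ∧ i ≤ n) ∧ j ∈ rowsAt π i := by
  unfold colSet
  rw [Finset.mem_filter, Finset.mem_Icc]

theorem colSet_card {n : ℕ} {π : List ℕ} (hπ : π.Perm (List.range (n + 1)))
    (h0 : π.getLast? = some 0) (j : ℕ) :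
    ((Finset.Icc 1 n).filter (fun v => rowOf π v = j)).card = (colSet π n j).card := by
  refine Finset.card_bij (fun v _ => colOf π v) ?_ ?_ ?_
  · intro v hv
    rw [Finset.mem_filter, Finset.mem_Icc] at hv
    obtain ⟨⟨hv1, hv2⟩, hrow⟩ := hv
    obtain ⟨hc1, hcn, hcv⟩ := col_package hπ h0 hv1 hv2
    exact mem_colSet.mpr ⟨⟨hc1, hcn⟩, mem_rowsAt.mpr ⟨v, hcv, hrow⟩⟩
  · intro v hv w hw heq
    rw [Finset.mem_filter, Finset.mem_Icc] at hv hw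
    obtain ⟨⟨hv1, hv2⟩, hrowv⟩ := hv
    obtain ⟨⟨hw1, hw2⟩, hroww⟩ := hw
    obtain ⟨hc1, _, hcv⟩ := col_package hπ h0 hv1 hv2
    obtain ⟨hd1, _, hcw⟩ := col_package hπ h0 hw1 hw2
    have heq' : colOf π v = colOf π w := heq
    rw [heq'] at hcv
    exact rowOf_injOn hπ h0 (colOf π w) (by omega) v hcv w hcw (by rw [hrowv, hroww])
  · intro c hc
    obtain ⟨⟨hc1, hcn⟩, hj⟩ := mem_colSet.mp hc
    obtain ⟨v, hvC, hrow⟩ := mem_rowsAt.mp hj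
    have hvp : v ∈ prefixAt π 1 :=
      prefix_mono hπ h0 (le_refl _) hc1 (colSeq_subset_prefix hvC)
    obtain ⟨hv1, hv2⟩ := (mem_prefix_one hπ h0 v).mp hvp
    refine ⟨v, ?_, colOf_eq hπ h0 hc1 hvC⟩
    rw [Finset.mem_filter, Finset.mem_Icc]
    exact ⟨⟨hv1, hv2⟩, hrow⟩

theorem colSet_eq {n : ℕ} {π : List ℕ} (hπ : π.Perm (List.range (n + 1)))
    (h0 : π.getLast? = some 0) (j : ℕ) :
    colSet π n j = Finset.Icc 1 (colSet π n j).card := by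
  refine down_closed_eq _ ?_ ?_
  · intro h
    have := (mem_colSet.mp h).1
    omega
  · intro i hi h
    obtain ⟨⟨_, hin⟩, hj⟩ := mem_colSet.mp h
    exact mem_colSet.mpr ⟨⟨hi, by omega⟩, rows_mono hπ h0 hi hj⟩

theorem alpha_length (π : List ℕ) : (alphaOf π).length = (colSeqAt π 1).length := by
  unfold alphaOf
  rw [List.length_map, List.length_range']

theorem alpha_getD {π : List ℕ} {j : ℕ} (hj1 : 1 ≤ j) (hj2 : j ≤ (colSeqAt π 1).length) :
    (alphaOf π).getD (j-1) 0 =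
      ((Finset.Icc 1 (π.length - 1)).filter (fun v => rowOf π v = j)).card := by
  unfold alphaOf
  have hlt : j - 1 < ((List.range' 1 (colSeqAt π 1).length).map
      (fun j => ((Finset.Icc 1 (π.length - 1)).filter (fun v => rowOf π v = j)).card)).length := by
    rw [List.length_map, List.length_range']
    omega
  have hlt2 : j - 1 < (List.range' 1 (colSeqAt π 1).length).length := by
    rw [List.length_range']; omega
  rw [List.getD_eq_getElem _ _ hlt, List.getElem_map]
  have hval : (List.range' 1 (colSeqAt π 1).length)[j-1]'hlt2 = j := by
    rw [List.getElem_range'_1]; omega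
  rw [hval]

end MyAux

/-- Corollary 3.17: the stack-sorting tableau `T_π : {1,…,n} → D(α_π)` is a bijection. -/
theorem stmt_12 (n : ℕ) (π : List ℕ) (hπ : π.Perm (List.range (n + 1)))
    (h0 : π.getLast? = some 0) :
    Set.BijOn (Tmap π) (Set.Icc 1 n) {p | inDiagram (alphaOf π) p} := by
  have hn : π.length - 1 = n := by rw [hπ.length_eq, List.length_range]; omega
  have halen := alpha_length π
  have hrows1 := rowsAt_one hπ h0
  refine ⟨?_, ?_, ?_⟩
  · -- MapsTo
    intro v hv
    rw [Set.mem_Icc] at hv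
    obtain ⟨hv1, hv2⟩ := hv
    obtain ⟨hc1, hcn, hcv⟩ := col_package hπ h0 hv1 hv2
    have hj : rowOf π v ∈ rowsAt π (colOf π v) := mem_rowsAt.mpr ⟨v, hcv, rfl⟩
    have hj1 : rowOf π v ∈ rowsAt π 1 := rows_le hπ h0 (le_refl 1) hc1 hj
    rw [hrows1, Finset.mem_Icc] at hj1
    have hcK : colOf π v ∈ colSet π n (rowOf π v) := mem_colSet.mpr ⟨⟨hc1, hcn⟩, hj⟩
    rw [colSet_eq hπ h0 _, Finset.mem_Icc] at hcK
    show inDiagram (alphaOf π) (Tmap π v)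
    unfold Tmap inDiagram
    refine ⟨hc1, hj1.1, by rw [halen]; exact hj1.2, ?_⟩
    simp only
    rw [alpha_getD hj1.1 hj1.2, hn, colSet_card hπ h0 (rowOf π v)]
    exact hcK.2
  · -- InjOn
    intro v hv w hw heq
    rw [Set.mem_Icc] at hv hw
    obtain ⟨hc1, hcn, hcv⟩ := col_package hπ h0 hv.1 hv.2
    obtain ⟨hd1, hdn, hcw⟩ := col_package hπ h0 hw.1 hw.2
    unfold Tmap at heq
    have h1 : colOf π v = colOf π w := congrArg Prod.fst heq
    have h2 : rowOf π v = rowOf π w := congrArg Prod.snd heq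
    rw [h1] at hcv
    exact rowOf_injOn hπ h0 (colOf π w) hd1 v hcv w hcw h2
  · -- SurjOn
    intro p hp
    obtain ⟨c, j⟩ := p
    have hp' : inDiagram (alphaOf π) (c, j) := hp
    obtain ⟨hc1, hj1, hjlen, hcle⟩ := hp'
    simp only at hc1 hj1 hjlen hcle
    rw [halen] at hjlen
    rw [alpha_getD hj1 hjlen, hn, colSet_card hπ h0 j] at hcle
    have hcK : c ∈ colSet π n j := by
      rw [colSet_eq hπ h0 j, Finset.mem_Icc]
      exact ⟨hc1, hcle⟩
    obtain ⟨⟨hcc1, hccn⟩, hj⟩ := mem_colSet.mp hcK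
    obtain ⟨v, hvC, hrow⟩ := mem_rowsAt.mp hj
    have hvp := prefix_mono hπ h0 (le_refl 1) hcc1 (colSeq_subset_prefix hvC)
    obtain ⟨hv1, hv2⟩ := (mem_prefix_one hπ h0 v).mp hvp
    refine ⟨v, Set.mem_Icc.mpr ⟨hv1, hv2⟩, ?_⟩
    unfold Tmap
    rw [colOf_eq hπ h0 hcc1 hvC, hrow]
end
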